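/- arXiv:2212.00275 — 6 statements merged into one kernel-verified Lean document; each statement's English description precedes it below -/
import Mathlib

section
/- Let G be an order-preserving concave self-map on the set of strictly positive vectors in ℝ^n. Suppose (i) for every strictly positive x there exists strictly positive p with p ≤ x and Gp ≫ p, and (ii) for every strictly positive x there exists strictly positive q with x ≤ q and Gq ≤ q. Then G has a unique fixed point x̄ in the strictly positive cone, and for every strictly positive x, G^k x → x̄ as k → ∞. -/
open Filter

/-- Key lemma: on an order interval [p,q] with Gp ≫ p and Gq ≤ q, the iterates
from p and q squeeze together geometrically. -/
lemma aux_key {n : ℕ} (hn : 0 < n) (G : (Fin n → ℝ) → (Fin n → ℝ))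
    (hself : ∀ x, (∀ i, 0 < x i) → ∀ i, 0 < G x i)
    (hmono : ∀ x y, (∀ i, 0 < x i) → (∀ i, 0 < y i) → x ≤ y → G x ≤ G y)
    (hconc : ∀ x y, (∀ i, 0 < x i) → (∀ i, 0 < y i) →
      ∀ lam : ℝ, lam ∈ Set.Icc (0 : ℝ) 1 →
        lam • G x + (1 - lam) • G y ≤ G (lam • x + (1 - lam) • y))
    (p q : Fin n → ℝ) (hp : ∀ i, 0 < p i) (hq : ∀ i, 0 < q i) (hpq : p ≤ q)
    (hGp : ∀ i, p i < G p i) (hGq : G q ≤ q) :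
    ∃ σ : ℝ, 0 < σ ∧ σ ≤ 1 ∧ ∀ k : ℕ,
      (∀ i, 0 < G^[k] p i) ∧ (∀ i, 0 < G^[k] q i) ∧
      p ≤ G^[k] p ∧ G^[k] p ≤ G^[k] q ∧ G^[k] q ≤ q ∧
      G^[k] p ≤ G^[k+1] p ∧ G^[k+1] q ≤ G^[k] q ∧
      (∀ i, G^[k] q i - G^[k] p i ≤ (1 - σ)^k * q i) := by
  haveI : Nonempty (Fin n) := ⟨⟨0, hn⟩⟩
  set μ : ℝ := Finset.univ.inf' Finset.univ_nonempty (fun i => (G p i - p i) / p i) with hμ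
  have hμ0 : 0 < μ := by
    rw [hμ, Finset.lt_inf'_iff]
    intro i _
    exact div_pos (by linarith [hGp i]) (hp i)
  have hμle : ∀ i, μ * p i ≤ G p i - p i := by
    intro i
    have h := Finset.inf'_le (s := (Finset.univ : Finset (Fin n)))
      (fun i => (G p i - p i) / p i) (Finset.mem_univ i)
    rw [← hμ] at h
    have := (le_div_iff₀ (hp i)).mp h
    linarith
  set σ : ℝ := min 1 (Finset.univ.inf' Finset.univ_nonempty (fun i => μ * p i / q i)) with hσ
  have hσ0 : 0 < σ := by
    rw [hσ, lt_min_iff]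
    refine ⟨one_pos, ?_⟩
    rw [Finset.lt_inf'_iff]
    intro i _
    exact div_pos (mul_pos hμ0 (hp i)) (hq i)
  have hσ1 : σ ≤ 1 := min_le_left _ _
  have hσq : ∀ i, σ * q i ≤ μ * p i := by
    intro i
    have h : σ ≤ μ * p i / q i := le_trans (min_le_right _ _)
      (Finset.inf'_le (s := (Finset.univ : Finset (Fin n)))
        (fun i => μ * p i / q i) (Finset.mem_univ i))
    calc σ * q i ≤ (μ * p i / q i) * q i :=
          mul_le_mul_of_nonneg_right h (le_of_lt (hq i))
      _ = μ * p i := div_mul_cancel₀ _ (ne_of_gt (hq i))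
  have he0 : (0:ℝ) ≤ 1 - σ := by linarith
  -- main induction with the concavity certificate
  have H : ∀ k : ℕ,
      (∀ i, 0 < G^[k] p i) ∧ (∀ i, 0 < G^[k] q i) ∧
      p ≤ G^[k] p ∧ G^[k] p ≤ G^[k] q ∧ G^[k] q ≤ q ∧
      (1 - (1-σ)^k) • G^[k] q + ((1-σ)^k) • p ≤ G^[k] p := by
    intro k
    induction k with
    | zero =>
      refine ⟨by simpa using hp, by simpa using hq, by simp, by simpa using hpq,
        by simp, by simp⟩
    | succ k ih =>
      obtain ⟨posa, posb, hpa, hab, hbq, hmain⟩ := ih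
      set a := G^[k] p with ha
      set b := G^[k] q with hb
      set e : ℝ := (1-σ)^k with heq
      have hek : (0:ℝ) ≤ e := pow_nonneg he0 k
      have hek1 : e ≤ 1 := pow_le_one₀ he0 (by linarith)
      have ht0 : (0:ℝ) ≤ 1 - e := by linarith
      have ht1 : (1:ℝ) - e ≤ 1 := by linarith
      have posa' : ∀ i, 0 < G a i := hself a posa
      have posb' : ∀ i, 0 < G b i := hself b posb
      have hpa' : p ≤ G a := le_trans (fun i => le_of_lt (hGp i)) (hmono p a hp posa hpa)
      have hab' : G a ≤ G b := hmono a b posa posb hab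
      have hbq' : G b ≤ q := le_trans (hmono b q posb hq hbq) hGq
      -- the convex combination
      set c : Fin n → ℝ := (1 - e) • b + e • p with hc
      have hcpos : ∀ i, 0 < c i := by
        intro i
        have hbi : p i ≤ b i := le_trans (hpa i) (hab i)
        have : p i ≤ c i := by
          simp only [hc, Pi.add_apply, Pi.smul_apply, smul_eq_mul]
          nlinarith
        linarith [hp i]
      have hca : c ≤ a := by
        intro i
        have := hmain i
        simpa [hc] using this
      have step1 : G c ≤ G a := hmono c a hcpos posa hca
      have step2 : (1 - e) • G b + (1 - (1 - e)) • G p ≤ G ((1 - e) • b + (1 - (1 - e)) • p) :=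
        hconc b p posb hp (1 - e) ⟨ht0, ht1⟩
      have hchain : (1 - e) • G b + e • G p ≤ G a := by
        refine le_trans ?_ step1
        have h' : (1 - (1 - e)) = e := by ring
        rw [h'] at step2
        exact step2
      simp only [Function.iterate_succ_apply']
      refine ⟨posa', posb', hpa', hab', hbq', ?_⟩
      intro i
      have hch := hchain i
      simp only [Pi.add_apply, Pi.smul_apply, smul_eq_mul] at hch ⊢
      have hGpi : p i + μ * p i ≤ G p i := by linarith [hμle i]
      have hbq'i : G b i ≤ q i := hbq' i
      have hkey : σ * G b i + (1 - σ) * p i ≤ G p i := by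
        nlinarith [hσq i, hp i, hq i]
      have hkey2 : e * (σ * G b i + (1 - σ) * p i) ≤ e * G p i :=
        mul_le_mul_of_nonneg_left hkey hek
      have hpow : (1-σ)^(k+1) = e * (1 - σ) := by rw [heq, pow_succ]
      rw [hpow]
      nlinarith [hkey2, hch]
  -- monotonicity of the two iterate sequences
  have hmono_a : ∀ k : ℕ, G^[k] p ≤ G^[k+1] p := by
    intro k
    induction k with
    | zero => exact fun i => le_of_lt (hGp i)
    | succ m ihm =>
      have h := hmono _ _ (H m).1 (H (m+1)).1 ihm
      rw [← Function.iterate_succ_apply' G m, ← Function.iterate_succ_apply' G (m+1)] at h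
      exact h
  have hmono_b : ∀ k : ℕ, G^[k+1] q ≤ G^[k] q := by
    intro k
    induction k with
    | zero => simpa using hGq
    | succ m ihm =>
      have h := hmono _ _ (H (m+1)).2.1 (H m).2.1 ihm
      rw [← Function.iterate_succ_apply' G (m+1), ← Function.iterate_succ_apply' G m] at h
      exact h
  refine ⟨σ, hσ0, hσ1, fun k => ?_⟩
  obtain ⟨posa, posb, hpa, hab, hbq, hmain⟩ := H k
  refine ⟨posa, posb, hpa, hab, hbq, hmono_a k, hmono_b k, fun i => ?_⟩
  have hm := hmain i
  simp only [Pi.add_apply, Pi.smul_apply, smul_eq_mul] at hm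
  have hek : (0:ℝ) ≤ (1-σ)^k := pow_nonneg he0 k
  have hbqi : G^[k] q i ≤ q i := hbq i
  have hpi := hp i
  nlinarith

/-- Sandwich: iterates preserve order intervals. -/
lemma aux_sand {n : ℕ} (G : (Fin n → ℝ) → (Fin n → ℝ))
    (hself : ∀ x, (∀ i, 0 < x i) → ∀ i, 0 < G x i)
    (hmono : ∀ x y, (∀ i, 0 < x i) → (∀ i, 0 < y i) → x ≤ y → G x ≤ G y)
    (p x q : Fin n → ℝ) (hp : ∀ i, 0 < p i) (hx : ∀ i, 0 < x i) (hq : ∀ i, 0 < q i)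
    (hpx : p ≤ x) (hxq : x ≤ q) :
    ∀ k : ℕ, (∀ i, 0 < G^[k] p i) ∧ (∀ i, 0 < G^[k] x i) ∧ (∀ i, 0 < G^[k] q i) ∧
      G^[k] p ≤ G^[k] x ∧ G^[k] x ≤ G^[k] q := by
  intro k
  induction k with
  | zero => exact ⟨by simpa using hp, by simpa using hx, by simpa using hq,
      by simpa using hpx, by simpa using hxq⟩
  | succ m ih =>
    obtain ⟨h1, h2, h3, h4, h5⟩ := ih
    simp only [Function.iterate_succ_apply']
    exact ⟨hself _ h1, hself _ h2, hself _ h3, hmono _ _ h1 h2 h4, hmono _ _ h2 h3 h5⟩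

theorem stmt_5 {n : ℕ} (G : (Fin n → ℝ) → (Fin n → ℝ))
    (hself : ∀ x, (∀ i, 0 < x i) → ∀ i, 0 < G x i)
    (hmono : ∀ x y, (∀ i, 0 < x i) → (∀ i, 0 < y i) → x ≤ y → G x ≤ G y)
    (hconc : ∀ x y, (∀ i, 0 < x i) → (∀ i, 0 < y i) →
      ∀ lam : ℝ, lam ∈ Set.Icc (0 : ℝ) 1 →
        lam • G x + (1 - lam) • G y ≤ G (lam • x + (1 - lam) • y))
    (h1 : ∀ x, (∀ i, 0 < x i) → ∃ p, (∀ i, 0 < p i) ∧ p ≤ x ∧ (∀ i, p i < G p i))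
    (h2 : ∀ x, (∀ i, 0 < x i) → ∃ q, (∀ i, 0 < q i) ∧ x ≤ q ∧ G q ≤ q) :
    ∃ xbar : Fin n → ℝ, (∀ i, 0 < xbar i) ∧ G xbar = xbar ∧
      (∀ x, (∀ i, 0 < x i) → G x = x → x = xbar) ∧
      (∀ x, (∀ i, 0 < x i) →
        Filter.Tendsto (fun k => G^[k] x) Filter.atTop (nhds xbar)) := by
  rcases Nat.eq_zero_or_pos n with hn | hn
  · -- trivial case n = 0
    subst hn
    have hsub : ∀ y z : Fin 0 → ℝ, y = z := fun y z => funext fun i => i.elim0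
    refine ⟨fun _ => 1, fun i => i.elim0, hsub _ _, fun x _ _ => hsub _ _, fun x _ => ?_⟩
    have : (fun k => G^[k] x) = fun _ => (fun _ => 1 : Fin 0 → ℝ) :=
      funext fun k => hsub _ _
    rw [this]
    exact tendsto_const_nhds
  -- main case
  obtain ⟨p, hp, hpx0, hGp⟩ := h1 (fun _ => 1) (fun _ => one_pos)
  obtain ⟨q, hq, hx0q, hGq⟩ := h2 (fun _ => 1) (fun _ => one_pos)
  have hpq : p ≤ q := le_trans hpx0 hx0q
  obtain ⟨σ, hσ0, hσ1, H⟩ := aux_key hn G hself hmono hconc p q hp hq hpq hGp hGq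
  have he0 : (0:ℝ) ≤ 1 - σ := by linarith
  have he1 : (1:ℝ) - σ < 1 := by linarith
  set a : ℕ → Fin n → ℝ := fun k => G^[k] p with ha
  set b : ℕ → Fin n → ℝ := fun k => G^[k] q with hb
  have hamono : ∀ i, Monotone fun k => a k i := by
    intro i
    apply monotone_nat_of_le_succ
    intro k
    exact (H k).2.2.2.2.2.1 i
  have hbanti : ∀ i, Antitone fun k => b k i := by
    intro i
    apply antitone_nat_of_succ_le
    intro k
    exact (H k).2.2.2.2.2.2.1 i
  have haq : ∀ k i, a k i ≤ q i := fun k i =>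
    le_trans ((H k).2.2.2.1 i) ((H k).2.2.2.2.1 i)
  have hbdd : ∀ i, BddAbove (Set.range fun k => a k i) := by
    intro i
    refine ⟨q i, ?_⟩
    rintro y ⟨k, rfl⟩
    exact haq k i
  set xbar : Fin n → ℝ := fun i => ⨆ k, a k i with hxbar
  have hconv_a : ∀ i, Tendsto (fun k => a k i) atTop (nhds (xbar i)) := fun i =>
    tendsto_atTop_ciSup (hamono i) (hbdd i)
  have hdiff0 : ∀ i, Tendsto (fun k => b k i - a k i) atTop (nhds 0) := by
    intro i
    refine squeeze_zero (fun k => by linarith [(H k).2.2.2.1 i])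
      (fun k => (H k).2.2.2.2.2.2.2 i) ?_
    have := (tendsto_pow_atTop_nhds_zero_of_lt_one he0 he1).mul_const (q i)
    simpa using this
  have hconv_b : ∀ i, Tendsto (fun k => b k i) atTop (nhds (xbar i)) := by
    intro i
    have := (hdiff0 i).add (hconv_a i)
    simpa using this
  have ha_le : ∀ k i, a k i ≤ xbar i := fun k i => le_ciSup (hbdd i) k
  have hxbar_le_b : ∀ k i, xbar i ≤ b k i := by
    intro k i
    refine ciSup_le fun m => ?_
    rcases le_total m k with h | h
    · exact le_trans (hamono i h) ((H k).2.2.2.1 i)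
    · exact le_trans ((H m).2.2.2.1 i) (hbanti i h)
  have hxpos : ∀ i, 0 < xbar i := by
    intro i
    have : p i ≤ xbar i := by
      have := ha_le 0 i
      simpa [ha] using this
    linarith [hp i]
  have hfix : G xbar = xbar := by
    funext i
    have hup : ∀ k : ℕ, G xbar i ≤ b (k+1) i := by
      intro k
      have h := hmono xbar (b k) hxpos (H k).2.1 (fun j => hxbar_le_b k j)
      have hb' : b (k+1) = G (b k) := by
        simp only [hb, Function.iterate_succ_apply']
      rw [hb']
      exact h i
    have hdown : ∀ k : ℕ, a (k+1) i ≤ G xbar i := by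
      intro k
      have h := hmono (a k) xbar (H k).1 hxpos (fun j => ha_le k j)
      have ha' : a (k+1) = G (a k) := by
        simp only [ha, Function.iterate_succ_apply']
      rw [ha']
      exact h i
    have htb : Tendsto (fun k : ℕ => b (k+1) i) atTop (nhds (xbar i)) :=
      (hconv_b i).comp (tendsto_add_atTop_nat 1)
    have hta : Tendsto (fun k : ℕ => a (k+1) i) atTop (nhds (xbar i)) :=
      (hconv_a i).comp (tendsto_add_atTop_nat 1)
    have h₁ : G xbar i ≤ xbar i := ge_of_tendsto' htb hup
    have h₂ : xbar i ≤ G xbar i := le_of_tendsto' hta hdown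
    linarith
  -- convergence from an arbitrary positive point
  have hconv : ∀ x, (∀ i, 0 < x i) →
      Tendsto (fun k => G^[k] x) atTop (nhds xbar) := by
    intro x hx
    set z : Fin n → ℝ := fun i => min (x i) (xbar i) with hz
    set w : Fin n → ℝ := fun i => max (x i) (xbar i) with hw
    have hzpos : ∀ i, 0 < z i := fun i => lt_min (hx i) (hxpos i)
    have hwpos : ∀ i, 0 < w i := fun i => lt_of_lt_of_le (hx i) (le_max_left _ _)
    obtain ⟨p', hp', hp'z, hGp'⟩ := h1 z hzpos
    obtain ⟨q', hq', hwq', hGq'⟩ := h2 w hwpos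
    have hp'x : p' ≤ x := le_trans hp'z (fun i => min_le_left _ _)
    have hp'xb : p' ≤ xbar := le_trans hp'z (fun i => min_le_right _ _)
    have hxq' : x ≤ q' := le_trans (fun i => le_max_left (x i) (xbar i)) hwq'
    have hxbq' : xbar ≤ q' := le_trans (fun i => le_max_right (x i) (xbar i)) hwq'
    have hp'q' : p' ≤ q' := le_trans hp'x hxq'
    obtain ⟨σ', hσ'0, hσ'1, H'⟩ := aux_key hn G hself hmono hconc p' q' hp' hq' hp'q' hGp' hGq'
    have he'0 : (0:ℝ) ≤ 1 - σ' := by linarith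
    have he'1 : (1:ℝ) - σ' < 1 := by linarith
    have Sx := aux_sand G hself hmono p' x q' hp' hx hq' hp'x hxq'
    have Sxb := aux_sand G hself hmono p' xbar q' hp' hxpos hq' hp'xb hxbq'
    have hxbit : ∀ k : ℕ, G^[k] xbar = xbar := fun k => Function.iterate_fixed hfix k
    rw [tendsto_pi_nhds]
    intro i
    have key : Tendsto (fun k => G^[k] x i - xbar i) atTop (nhds 0) := by
      refine squeeze_zero_norm (a := fun k => (1 - σ')^k * q' i) (fun k => ?_) ?_
      · have h₁ : G^[k] p' i ≤ G^[k] x i := (Sx k).2.2.2.1 i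
        have h₂ : G^[k] x i ≤ G^[k] q' i := (Sx k).2.2.2.2 i
        have h₃ : G^[k] p' i ≤ xbar i := by
          have := (Sxb k).2.2.2.1 i
          rwa [hxbit k] at this
        have h₄ : xbar i ≤ G^[k] q' i := by
          have := (Sxb k).2.2.2.2 i
          rwa [hxbit k] at this
        have h₅ : G^[k] q' i - G^[k] p' i ≤ (1 - σ')^k * q' i := (H' k).2.2.2.2.2.2.2 i
        show |G^[k] x i - xbar i| ≤ (1 - σ')^k * q' i
        rw [abs_le]
        constructor <;> linarith
      · have := (tendsto_pow_atTop_nhds_zero_of_lt_one he'0 he'1).mul_const (q' i)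
        simpa using this
    have := key.add (tendsto_const_nhds (x := xbar i))
    simpa using this
  -- uniqueness
  have huniq : ∀ x, (∀ i, 0 < x i) → G x = x → x = xbar := by
    intro x hx hfx
    have hcv := hconv x hx
    have : (fun k => G^[k] x) = fun _ => x :=
      funext fun k => Function.iterate_fixed hfx k
    rw [this] at hcv
    exact (tendsto_nhds_unique hcv tendsto_const_nhds).symm
  exact ⟨xbar, hxpos, hfix, huniq, hconv⟩
end

section
/- Let A be an n×n nonnegative irreducible matrix, b ∈ ℝ^n with all components strictly positive, and s a nonzero real number. Define G on strictly positive vectors y of ℝ^n by Gy = ((Ay)^{1/s} + b)^s, where powers are taken componentwise. If G has a fixed point with all components strictly positive, then r(A)^s < 1, where r(A) is the spectral radius of A. -/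
noncomputable def specRad {n : ℕ} (A : Matrix (Fin n) (Fin n) ℝ) : ℝ :=
  sSup {r : ℝ | ∃ μ ∈ spectrum ℂ (A.map (fun a => (a : ℂ))), r = ‖μ‖}

def MatIrreducible {n : ℕ} (A : Matrix (Fin n) (Fin n) ℝ) : Prop :=
  ∀ i j, ∃ k : ℕ, 0 < k ∧ 0 < (A ^ k) i j

section Aux

attribute [local instance] Matrix.linftyOpNormedAddCommGroup Matrix.linftyOpNormedRing
  Matrix.linftyOpNormedAlgebra

open Filter Finset Matrix

/-- Extract an eigenvector from spectrum membership. -/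
lemma exists_eigvec {n : ℕ} (M : Matrix (Fin n) (Fin n) ℂ) {μ : ℂ}
    (h : μ ∈ spectrum ℂ M) : ∃ v : Fin n → ℂ, v ≠ 0 ∧ M *ᵥ v = μ • v := by
  rw [← AlgEquiv.spectrum_eq
      (Matrix.toLinAlgEquiv' : Matrix (Fin n) (Fin n) ℂ ≃ₐ[ℂ] _)] at h
  rw [← Module.End.hasEigenvalue_iff_mem_spectrum] at h
  obtain ⟨v, hv⟩ := h.exists_hasEigenvector
  refine ⟨v, hv.2, ?_⟩
  have := hv.apply_eq_smul
  simpa [Matrix.toLinAlgEquiv'_apply, Matrix.toLin'_apply] using this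

/-- Upper bound: if `A y ≤ c y` componentwise with `y > 0`, every eigenvalue has modulus `≤ c`. -/
lemma abs_eig_le {n : ℕ} (A : Matrix (Fin n) (Fin n) ℝ) (hA : ∀ i j, 0 ≤ A i j)
    (y : Fin n → ℝ) (hy : ∀ i, 0 < y i) (c : ℝ)
    (hc : ∀ i, ∑ j, A i j * y j ≤ c * y i) {μ : ℂ}
    (hμ : μ ∈ spectrum ℂ (A.map (fun a => (a : ℂ)))) : ‖μ‖ ≤ c := by
  obtain ⟨v, hv0, hv⟩ := exists_eigvec _ hμ
  have hne : (Finset.univ : Finset (Fin n)).Nonempty := by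
    rcases isEmpty_or_nonempty (Fin n) with h | h
    · exact absurd (funext fun i => (h.false i).elim) hv0
    · exact Finset.univ_nonempty
  obtain ⟨i0, -, hmax⟩ := Finset.exists_max_image Finset.univ
    (fun i => ‖v i‖ / y i) hne
  set t := ‖v i0‖ / y i0 with ht
  have hvyle : ∀ j, ‖v j‖ ≤ t * y j := by
    intro j
    have h1 := hmax j (Finset.mem_univ j)
    calc ‖v j‖ = ‖v j‖ / y j * y j :=
          (div_mul_cancel₀ _ (hy j).ne').symm
      _ ≤ t * y j := mul_le_mul_of_nonneg_right h1 (hy j).le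
  have htpos : 0 < t := by
    obtain ⟨j, hj⟩ := Function.ne_iff.mp hv0
    have h1 : 0 < ‖v j‖ / y j :=
      div_pos (norm_pos_iff.mpr hj) (hy j)
    exact lt_of_lt_of_le h1 (hmax j (Finset.mem_univ j))
  have hvi0 : ‖v i0‖ = t * y i0 := by
    rw [ht, div_mul_cancel₀ _ (hy i0).ne']
  have heig : μ * v i0 = ∑ j, (A i0 j : ℂ) * v j := by
    have h2 := congrFun hv i0
    simp only [Pi.smul_apply, smul_eq_mul] at h2
    rw [← h2]
    simp [Matrix.mulVec, dotProduct, Matrix.map_apply]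
  have key : ‖μ‖ * (t * y i0) ≤ c * (t * y i0) := by
    calc ‖μ‖ * (t * y i0) = ‖μ * v i0‖ := by
          rw [norm_mul, hvi0]
      _ = ‖∑ j, (A i0 j : ℂ) * v j‖ := by rw [heig]
      _ ≤ ∑ j, ‖(A i0 j : ℂ) * v j‖ :=
          norm_sum_le _ _
      _ = ∑ j, A i0 j * ‖v j‖ := by
          refine Finset.sum_congr rfl fun j _ => ?_
          rw [norm_mul, Complex.norm_real, Real.norm_eq_abs, abs_of_nonneg (hA i0 j)]
      _ ≤ ∑ j, A i0 j * (t * y j) :=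
          Finset.sum_le_sum fun j _ =>
            mul_le_mul_of_nonneg_left (hvyle j) (hA i0 j)
      _ = t * ∑ j, A i0 j * y j := by
          rw [Finset.mul_sum]; exact Finset.sum_congr rfl fun j _ => by ring
      _ ≤ t * (c * y i0) := mul_le_mul_of_nonneg_left (hc i0) htpos.le
      _ = c * (t * y i0) := by ring
  exact le_of_mul_le_mul_right key (mul_pos htpos (hy i0))

lemma pow_entry_nonneg {n : ℕ} (A : Matrix (Fin n) (Fin n) ℝ) (hA : ∀ i j, 0 ≤ A i j) :
    ∀ (k : ℕ) (i j : Fin n), 0 ≤ (A ^ k) i j := by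
  intro k
  induction k with
  | zero => intro i j; rw [pow_zero]; simp [Matrix.one_apply]; positivity
  | succ k ih =>
    intro i j
    rw [pow_succ, Matrix.mul_apply]
    exact Finset.sum_nonneg fun l _ => mul_nonneg (ih i l) (hA l j)

lemma specSet_bddAbove {n : ℕ} (M : Matrix (Fin n) (Fin n) ℂ) :
    BddAbove {r : ℝ | ∃ μ ∈ spectrum ℂ M, r = ‖μ‖} := by
  haveI : CompleteSpace (Matrix (Fin n) (Fin n) ℂ) := FiniteDimensional.complete ℂ _
  have h : {r : ℝ | ∃ μ ∈ spectrum ℂ M, r = ‖μ‖}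
      = (fun z : ℂ => ‖z‖) '' spectrum ℂ M := by
    ext r
    simp only [Set.mem_setOf_eq, Set.mem_image]
    constructor
    · rintro ⟨μ, hμ, rfl⟩; exact ⟨μ, hμ, rfl⟩
    · rintro ⟨μ, hμ, rfl⟩; exact ⟨μ, hμ, rfl⟩
  rw [h]
  exact ((spectrum.isCompact M).image continuous_norm).bddAbove

/-- Lower bound via Gelfand's formula: if `c y ≤ A y` componentwise with `y > 0`, `c ≥ 0`,
then some eigenvalue has modulus `≥ c`. -/
lemma exists_abs_eig_ge {n : ℕ} (hn : 0 < n) (A : Matrix (Fin n) (Fin n) ℝ)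
    (hA : ∀ i j, 0 ≤ A i j) (y : Fin n → ℝ) (hy : ∀ i, 0 < y i) (c : ℝ) (hc0 : 0 ≤ c)
    (hc : ∀ i, c * y i ≤ ∑ j, A i j * y j) :
    ∃ μ ∈ spectrum ℂ (A.map (fun a => (a : ℂ))), c ≤ ‖μ‖ := by
  haveI : Nonempty (Fin n) := ⟨⟨0, hn⟩⟩
  haveI : CompleteSpace (Matrix (Fin n) (Fin n) ℂ) := FiniteDimensional.complete ℂ _
  set M : Matrix (Fin n) (Fin n) ℂ := A.map (fun a => (a : ℂ)) with hM
  have hMpow : ∀ k : ℕ, M ^ k = (A ^ k).map (fun a => (a : ℂ)) := by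
    intro k
    have h : M = Complex.ofRealHom.mapMatrix A := rfl
    rw [h, ← map_pow]
    rfl
  -- componentwise power bound
  have hiter : ∀ (k : ℕ) (i : Fin n), c ^ k * y i ≤ ∑ j, (A ^ k) i j * y j := by
    intro k
    induction k with
    | zero => intro i; simp [Matrix.one_apply]
    | succ k ih =>
      intro i
      have h1 : c ^ (k + 1) * y i ≤ c ^ k * ∑ j, A i j * y j := by
        rw [pow_succ, mul_assoc]
        exact mul_le_mul_of_nonneg_left (hc i) (pow_nonneg hc0 k)
      have h2 : c ^ k * ∑ j, A i j * y j ≤ ∑ j, A i j * (∑ l, (A ^ k) j l * y l) := by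
        rw [Finset.mul_sum]
        refine Finset.sum_le_sum fun j _ => ?_
        calc c ^ k * (A i j * y j) = A i j * (c ^ k * y j) := by ring
          _ ≤ A i j * ∑ l, (A ^ k) j l * y l :=
              mul_le_mul_of_nonneg_left (ih j) (hA i j)
      have h3 : ∑ j, A i j * (∑ l, (A ^ k) j l * y l)
          = ∑ l, (A ^ (k + 1)) i l * y l := by
        simp_rw [Finset.mul_sum, pow_succ', Matrix.mul_apply, Finset.sum_mul]
        rw [Finset.sum_comm]
        exact Finset.sum_congr rfl fun l _ =>
          Finset.sum_congr rfl fun j _ => by ring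
      exact h1.trans (h2.trans h3.le)
  -- norm lower bound : take i maximizing y
  obtain ⟨imax, -, hmaxy⟩ := Finset.exists_max_image Finset.univ y Finset.univ_nonempty
  have hnorm : ∀ k : ℕ, c ^ k ≤ ‖M ^ k‖ := by
    intro k
    have h1 : c ^ k * y imax ≤ ∑ j, (A ^ k) imax j * y j := hiter k imax
    have h2 : ∑ j, (A ^ k) imax j * y j ≤ (∑ j, (A ^ k) imax j) * y imax := by
      rw [Finset.sum_mul]
      exact Finset.sum_le_sum fun j _ =>
        mul_le_mul_of_nonneg_left (hmaxy j (Finset.mem_univ j))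
          (pow_entry_nonneg A hA k imax j)
    have h3 : c ^ k ≤ ∑ j, (A ^ k) imax j :=
      le_of_mul_le_mul_right (h1.trans h2) (hy imax)
    have h4 : ∑ j, (A ^ k) imax j = ∑ j, ‖(M ^ k) imax j‖ := by
      rw [hMpow k]
      refine Finset.sum_congr rfl fun j _ => ?_
      rw [Matrix.map_apply, Complex.norm_real, Real.norm_eq_abs,
        abs_of_nonneg (pow_entry_nonneg A hA k imax j)]
    have h5 : ∑ j, ‖(M ^ k) imax j‖ ≤ ‖M ^ k‖ := by
      rw [Matrix.linfty_opNorm_def]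
      have h := Finset.le_sup (f := fun i => ∑ j, ‖(M ^ k) i j‖₊) (Finset.mem_univ imax)
      have h' := NNReal.coe_le_coe.mpr h
      simpa [NNReal.coe_sum] using h'
    exact h3.trans (h4 ▸ h5)
  -- Gelfand
  have hle : ENNReal.ofReal c ≤ spectralRadius ℂ M := by
    refine ge_of_tendsto (spectrum.pow_norm_pow_one_div_tendsto_nhds_spectralRadius M) ?_
    filter_upwards [Filter.eventually_ge_atTop 1] with k hk
    have hcc : c = (c ^ k) ^ ((k : ℝ)⁻¹) :=
      (Real.pow_rpow_inv_natCast hc0 (by omega)).symm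
    calc ENNReal.ofReal c = ENNReal.ofReal ((c ^ k) ^ (1 / (k : ℝ))) := by
          rw [one_div, ← hcc]
      _ ≤ ENNReal.ofReal (‖M ^ k‖ ^ (1 / (k : ℝ))) :=
          ENNReal.ofReal_le_ofReal
            (Real.rpow_le_rpow (pow_nonneg hc0 k) (hnorm k) (by positivity))
  haveI : Nontrivial (Matrix (Fin n) (Fin n) ℂ) := by infer_instance
  obtain ⟨μ, hμ, hμr⟩ := spectrum.exists_nnnorm_eq_spectralRadius (a := M)
  refine ⟨μ, hμ, ?_⟩
  have h6 : ENNReal.ofReal c ≤ (‖μ‖₊ : ENNReal) := hμr ▸ hle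
  rw [← enorm_eq_nnnorm, ← ofReal_norm] at h6
  have h7 := (ENNReal.ofReal_le_ofReal_iff (norm_nonneg μ)).mp h6
  simpa using h7

end Aux

theorem stmt_9 {n : ℕ} (A : Matrix (Fin n) (Fin n) ℝ)
    (hA : ∀ i j, 0 ≤ A i j) (hirr : MatIrreducible A)
    (b : Fin n → ℝ) (hb : ∀ i, 0 < b i) (s : ℝ) (hs : s ≠ 0)
    (G : (Fin n → ℝ) → (Fin n → ℝ))
    (hG : ∀ y, G y = fun i => ((∑ j, A i j * y j) ^ (1 / s) + b i) ^ s)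
    (hfix : ∃ y : Fin n → ℝ, (∀ i, 0 < y i) ∧ G y = y) :
    specRad A ^ s < 1 := by
  rcases Nat.eq_zero_or_pos n with hn0 | hn
  · subst hn0
    have hempty : {r : ℝ | ∃ μ ∈ spectrum ℂ (A.map (fun a => (a : ℂ))), r = ‖μ‖}
        = ∅ := by
      haveI : Subsingleton (Matrix (Fin 0) (Fin 0) ℂ) :=
        ⟨fun a b => Matrix.ext fun i => i.elim0⟩
      ext r
      simp only [Set.mem_setOf_eq, Set.mem_empty_iff_false, iff_false]
      rintro ⟨μ, hμ, -⟩
      exact spectrum.mem_iff.mp hμ (isUnit_of_subsingleton _)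
    show sSup _ ^ s < 1
    rw [hempty, Real.sSup_empty, Real.zero_rpow hs]
    exact one_pos
  haveI : Nonempty (Fin n) := ⟨⟨0, hn⟩⟩
  obtain ⟨y, hy, hfixy⟩ := hfix
  rw [hG] at hfixy
  set f : Fin n → ℝ := fun i => ∑ j, A i j * y j with hf
  have hyeq : ∀ i, y i = (f i ^ (1 / s) + b i) ^ s := fun i => (congrFun hfixy i).symm
  have hf0 : ∀ i, 0 ≤ f i := fun i =>
    Finset.sum_nonneg fun j _ => mul_nonneg (hA i j) (hy j).le
  have key : ∀ i, y i ^ (1 / s) = f i ^ (1 / s) + b i := by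
    intro i
    have hbase : (0 : ℝ) < f i ^ (1 / s) + b i :=
      add_pos_of_nonneg_of_pos (Real.rpow_nonneg (hf0 i) _) (hb i)
    rw [hyeq i, ← Real.rpow_mul hbase.le, mul_one_div_cancel hs, Real.rpow_one]
  rcases hs.lt_or_gt with hsneg | hspos
  · -- s < 0
    have hfpos : ∀ i, 0 < f i := by
      intro i
      have hrow : ∃ j, 0 < A i j := by
        by_contra hco
        push_neg at hco
        have hAi : ∀ j, A i j = 0 := fun j => le_antisymm (hco j) (hA i j)
        obtain ⟨k, hk0, hkpos⟩ := hirr i i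
        obtain ⟨m, rfl⟩ := Nat.exists_eq_succ_of_ne_zero hk0.ne'
        have hzero : (A ^ (m + 1)) i i = 0 := by
          rw [pow_succ', Matrix.mul_apply]
          exact Finset.sum_eq_zero fun l _ => by rw [hAi l, zero_mul]
        rw [hzero] at hkpos
        exact lt_irrefl 0 hkpos
      obtain ⟨j, hj⟩ := hrow
      have h1 : 0 < A i j * y j := mul_pos hj (hy j)
      exact lt_of_lt_of_le h1
        (Finset.single_le_sum (fun l _ => mul_nonneg (hA i l) (hy l).le)
          (Finset.mem_univ j))
    have hgt : ∀ i, y i < f i := by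
      intro i
      have h1 : f i ^ (1 / s) < y i ^ (1 / s) := by
        rw [key i]; linarith [hb i]
      have h2 := Real.rpow_lt_rpow_of_neg (Real.rpow_pos_of_pos (hfpos i) _) h1 hsneg
      rw [one_div] at h2
      rwa [Real.rpow_inv_rpow (hfpos i).le hs, Real.rpow_inv_rpow (hy i).le hs] at h2
    obtain ⟨i0, -, hi0⟩ := Finset.exists_min_image Finset.univ (fun i => f i / y i)
      Finset.univ_nonempty
    set c := f i0 / y i0 with hcdef
    have hc1 : 1 < c := (one_lt_div (hy i0)).mpr (hgt i0)
    have hcb : ∀ i, c * y i ≤ f i := fun i =>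
      (le_div_iff₀ (hy i)).mp (hi0 i (Finset.mem_univ i))
    obtain ⟨μ, hμ, hcμ⟩ := exists_abs_eig_ge hn A hA y hy c (by linarith) hcb
    have h1 : ‖μ‖ ≤ specRad A :=
      le_csSup (specSet_bddAbove _) ⟨μ, hμ, rfl⟩
    exact Real.rpow_lt_one_of_one_lt_of_neg (by linarith) hsneg
  · -- s > 0
    have hlt : ∀ i, f i < y i := by
      intro i
      have h1 : f i ^ (1 / s) < y i ^ (1 / s) := by
        rw [key i]; linarith [hb i]
      have h2 := Real.rpow_lt_rpow (Real.rpow_nonneg (hf0 i) _) h1 hspos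
      rw [one_div] at h2
      rwa [Real.rpow_inv_rpow (hf0 i) hs, Real.rpow_inv_rpow (hy i).le hs] at h2
    obtain ⟨i0, -, hi0⟩ := Finset.exists_max_image Finset.univ (fun i => f i / y i)
      Finset.univ_nonempty
    set c := f i0 / y i0 with hcdef
    have hc1 : c < 1 := (div_lt_one (hy i0)).mpr (hlt i0)
    have hcb : ∀ i, f i ≤ c * y i := fun i =>
      (div_le_iff₀ (hy i)).mp (hi0 i (Finset.mem_univ i))
    set S := {r : ℝ | ∃ μ ∈ spectrum ℂ (A.map (fun a => (a : ℂ))), r = ‖μ‖}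
      with hS
    have hub : ∀ r ∈ S, r ≤ c := by
      rintro r ⟨μ, hμ, rfl⟩
      exact abs_eig_le A hA y hy c hcb hμ
    have hspec : specRad A = sSup S := rfl
    rcases S.eq_empty_or_nonempty with hSe | hSne
    · rw [hspec, hSe, Real.sSup_empty]
      exact Real.rpow_lt_one le_rfl one_pos hspos
    · have hle : sSup S ≤ c := csSup_le hSne hub
      have hge : 0 ≤ sSup S := by
        obtain ⟨r, hr⟩ := hSne
        obtain ⟨μ, hμ, hrμ⟩ := id hr
        have h0r : 0 ≤ r := hrμ ▸ norm_nonneg μ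
        exact h0r.trans (le_csSup ⟨c, hub⟩ hr)
      rw [hspec]
      exact Real.rpow_lt_one hge (lt_of_le_of_lt hle hc1) hspos
end

section
/- Let A be an n×n nonnegative irreducible matrix with spectral radius r = r(A), and let e be a strictly positive (right) Perron eigenvector, Ae = re. Let b ≫ 0 and s ≠ 0 with r^s < 1. Define Gy = ((Ay)^{1/s} + b)^s componentwise for strictly positive y. Then for every strictly positive y there exist strictly positive vectors p, q with p ≤ y ≤ q, Gp ≫ p, and Gq ≪ q. -/
/-- strict lower bound -/
lemma aux_lb {n : ℕ} (hn : 0 < n) (f : Fin n → ℝ) (hf : ∀ i, 0 < f i) :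
    ∃ c : ℝ, 0 < c ∧ ∀ i, c < f i := by
  obtain ⟨i, -, hi⟩ := Finset.exists_min_image Finset.univ f ⟨⟨0, hn⟩, Finset.mem_univ _⟩
  exact ⟨f i / 2, by linarith [hf i], fun j =>
    lt_of_lt_of_le (by linarith [hf i]) (hi j (Finset.mem_univ j))⟩

/-- strict upper bound -/
lemma aux_ub {n : ℕ} (hn : 0 < n) (f : Fin n → ℝ) (hf : ∀ i, 0 < f i) :
    ∃ c : ℝ, 0 < c ∧ ∀ i, f i < c := by
  obtain ⟨i, -, hi⟩ := Finset.exists_max_image Finset.univ f ⟨⟨0, hn⟩, Finset.mem_univ _⟩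
  exact ⟨f i + 1, by linarith [hf i], fun j =>
    lt_of_le_of_lt (hi j (Finset.mem_univ j)) (by linarith)⟩

theorem stmt_10 {n : ℕ} (A : Matrix (Fin n) (Fin n) ℝ)
    (hA : ∀ i j, 0 ≤ A i j) (hirr : MatIrreducible A)
    (e : Fin n → ℝ) (he : ∀ i, 0 < e i)
    (heig : A.mulVec e = specRad A • e)
    (b : Fin n → ℝ) (hb : ∀ i, 0 < b i) (s : ℝ) (hs : s ≠ 0)
    (hr : specRad A ^ s < 1)
    (G : (Fin n → ℝ) → (Fin n → ℝ))
    (hG : ∀ y, G y = fun i => ((∑ j, A i j * y j) ^ (1 / s) + b i) ^ s) :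
    ∀ y : Fin n → ℝ, (∀ i, 0 < y i) →
      ∃ p q : Fin n → ℝ, (∀ i, 0 < p i) ∧ (∀ i, 0 < q i) ∧
        p ≤ y ∧ y ≤ q ∧ (∀ i, p i < G p i) ∧ (∀ i, G q i < q i) := by
  intro y hy
  rcases Nat.eq_zero_or_pos n with hn | hn
  · subst hn
    exact ⟨y, y, fun i => i.elim0, fun i => i.elim0, le_refl _, le_refl _,
      fun i => i.elim0, fun i => i.elim0⟩
  have i0 : Fin n := ⟨0, hn⟩
  set r := specRad A with hrdef
  -- eigen equation componentwise
  have heigc : ∀ i, ∑ j, A i j * e j = r * e i := by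
    intro i
    have := congrFun heig i
    simpa [Matrix.mulVec, dotProduct, smul_eq_mul] using this
  -- r > 0
  have hr0 : 0 < r := by
    have hge : 0 ≤ r := by
      have h2 : 0 ≤ ∑ j, A i0 j * e j :=
        Finset.sum_nonneg fun j _ => mul_nonneg (hA _ _) (he j).le
      rw [heigc i0] at h2
      nlinarith [he i0]
    rcases hge.lt_or_eq with h | h
    · exact h
    · exfalso
      have hAzero : A = 0 := by
        ext i j
        have hsum : ∑ k, A i k * e k = 0 := by rw [heigc i, ← h]; ring
        have := (Finset.sum_eq_zero_iff_of_nonneg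
          (fun k _ => mul_nonneg (hA i k) (he k).le)).mp hsum j (Finset.mem_univ j)
        have hej := (he j).ne'
        simpa [Matrix.zero_apply] using (mul_eq_zero.mp this).resolve_right hej
      obtain ⟨k, hk, hpos⟩ := hirr i0 i0
      rw [hAzero, zero_pow hk.ne'] at hpos
      simp at hpos
  -- sum identity for scalar multiples of e
  have hsum : ∀ (c : ℝ) (i : Fin n), ∑ j, A i j * (c * e j) = c * (r * e i) := by
    intro c i
    rw [← heigc i, Finset.mul_sum]
    exact Finset.sum_congr rfl fun j _ => by ring
  rcases hs.lt_or_gt with hsneg | hspos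
  · -- s < 0 : then r > 1
    have hr1 : 1 < r := by
      by_contra h
      push_neg at h
      have : (1 : ℝ) ≤ r ^ s := by
        calc (1 : ℝ) = 1 ^ s := (Real.one_rpow s).symm
        _ ≤ r ^ s := Real.rpow_le_rpow_of_nonpos hr0 h hsneg.le
      linarith
    have h1sneg : 1 / s < 0 := div_neg_of_pos_of_neg one_pos hsneg
    have hrs : r ^ (1 / s) < 1 := Real.rpow_lt_one_of_one_lt_of_neg hr1 h1sneg
    -- choose C₁ bounding b i / (e i ^ (1/s) * (1 - r^(1/s)))
    have hdenpos : ∀ i, 0 < e i ^ (1 / s) * (1 - r ^ (1 / s)) := fun i =>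
      mul_pos (Real.rpow_pos_of_pos (he i) _) (by linarith)
    obtain ⟨C₁, hC₁pos, hC₁⟩ := aux_ub hn (fun i => b i / (e i ^ (1 / s) * (1 - r ^ (1 / s))))
      (fun i => div_pos (hb i) (hdenpos i))
    -- small c for p: c ≤ C₁ ^ s and c * e i ≤ y i
    obtain ⟨c₂, hc₂pos, hc₂⟩ := aux_lb hn (fun i => y i / e i) (fun i => div_pos (hy i) (he i))
    set cp : ℝ := min (C₁ ^ s) c₂ with hcp
    have hcppos : 0 < cp := lt_min (Real.rpow_pos_of_pos hC₁pos s) hc₂pos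
    -- big c for q: c * e i ≥ y i and c * e i > b i ^ s
    obtain ⟨cq, hcqpos, hcq⟩ := aux_ub hn (fun i => max (y i / e i) (b i ^ s / e i))
      (fun i => lt_max_of_lt_left (div_pos (hy i) (he i)))
    refine ⟨fun i => cp * e i, fun i => cq * e i, fun i => mul_pos hcppos (he i),
      fun i => mul_pos hcqpos (he i), fun i => ?_, fun i => ?_, fun i => ?_, fun i => ?_⟩
    · -- cp * e i ≤ y i
      show cp * e i ≤ y i
      have := hc₂ i
      rw [lt_div_iff₀ (he i)] at this
      have h2 : cp ≤ c₂ := min_le_right _ _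
      nlinarith [mul_le_mul_of_nonneg_right h2 (he i).le]
    · -- y i ≤ cq * e i
      show y i ≤ cq * e i
      have := lt_of_le_of_lt (le_max_left _ _) (hcq i)
      rw [div_lt_iff₀ (he i)] at this
      linarith
    · -- p < G p : key inequality
      rw [hG]
      simp only
      rw [hsum cp i]
      have hx : (cp * (r * e i)) ^ (1 / s) + b i < (cp * e i) ^ (1 / s) := by
        have e1 : (cp * e i) ^ (1 / s) = cp ^ (1 / s) * e i ^ (1 / s) :=
          Real.mul_rpow hcppos.le (he i).le
        have e2 : (cp * (r * e i)) ^ (1 / s)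
            = cp ^ (1 / s) * (r ^ (1 / s) * e i ^ (1 / s)) := by
          rw [Real.mul_rpow hcppos.le (mul_pos hr0 (he i)).le,
            Real.mul_rpow hr0.le (he i).le]
        have hcps : C₁ ≤ cp ^ (1 / s) := by
          have h1 : cp ≤ C₁ ^ s := min_le_left _ _
          have := Real.rpow_le_rpow_of_nonpos hcppos h1 h1sneg.le
          rwa [← Real.rpow_mul hC₁pos.le, mul_one_div, div_self hs, Real.rpow_one] at this
        have hbi : b i < cp ^ (1 / s) * (e i ^ (1 / s) * (1 - r ^ (1 / s))) := by
          have h3 := hC₁ i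
          rw [div_lt_iff₀ (hdenpos i)] at h3
          have h4 : C₁ * (e i ^ (1 / s) * (1 - r ^ (1 / s)))
              ≤ cp ^ (1 / s) * (e i ^ (1 / s) * (1 - r ^ (1 / s))) :=
            mul_le_mul_of_nonneg_right hcps (hdenpos i).le
          linarith
        nlinarith [e1, e2]
      have hs' : ((cp * e i) ^ (1 / s)) ^ s = cp * e i := by
        rw [one_div, Real.rpow_inv_rpow (mul_pos hcppos (he i)).le hs]
      calc cp * e i = ((cp * e i) ^ (1 / s)) ^ s := hs'.symm
        _ < ((cp * (r * e i)) ^ (1 / s) + b i) ^ s := by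
            exact Real.rpow_lt_rpow_of_neg
              (add_pos (Real.rpow_pos_of_pos (mul_pos hcppos (mul_pos hr0 (he i))) _) (hb i))
              hx hsneg
    · -- G q < q : easy bound by b^s
      rw [hG]
      simp only
      rw [hsum cq i]
      have h1 : b i < (cq * (r * e i)) ^ (1 / s) + b i := by
        have := Real.rpow_pos_of_pos (mul_pos hcqpos (mul_pos hr0 (he i))) (1 / s)
        linarith
      have h2 : ((cq * (r * e i)) ^ (1 / s) + b i) ^ s < b i ^ s :=
        Real.rpow_lt_rpow_of_neg (hb i) h1 hsneg
      have h3 := lt_of_le_of_lt (le_max_right (y i / e i) _) (hcq i)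
      rw [div_lt_iff₀ (he i)] at h3
      linarith
  · -- s > 0 : then r < 1
    have hr1 : r < 1 := by
      by_contra h
      push_neg at h
      have : (1 : ℝ) ≤ r ^ s := by
        calc (1 : ℝ) = 1 ^ s := (Real.one_rpow s).symm
        _ ≤ r ^ s := Real.rpow_le_rpow (by norm_num) h hspos.le
      linarith
    have hrs : r ^ (1 / s) < 1 := by
      have := Real.rpow_lt_rpow hr0.le hr1 (by positivity : (0:ℝ) < 1 / s)
      rwa [Real.one_rpow] at this
    have hdenpos : ∀ i, 0 < e i ^ (1 / s) * (1 - r ^ (1 / s)) := fun i =>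
      mul_pos (Real.rpow_pos_of_pos (he i) _) (by linarith)
    obtain ⟨C₁, hC₁pos, hC₁⟩ := aux_ub hn (fun i => b i / (e i ^ (1 / s) * (1 - r ^ (1 / s))))
      (fun i => div_pos (hb i) (hdenpos i))
    -- small c for p: c * e i ≤ y i and c * e i < b i ^ s
    obtain ⟨cp, hcppos, hcp⟩ := aux_lb hn (fun i => min (y i / e i) (b i ^ s / e i))
      (fun i => lt_min (div_pos (hy i) (he i))
        (div_pos (Real.rpow_pos_of_pos (hb i) s) (he i)))
    -- big c for q: c ≥ C₁ ^ s and c * e i ≥ y i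
    obtain ⟨c₂, hc₂pos, hc₂⟩ := aux_ub hn (fun i => y i / e i) (fun i => div_pos (hy i) (he i))
    set cq : ℝ := max (C₁ ^ s) c₂ with hcq
    have hcqpos : 0 < cq := lt_max_of_lt_right hc₂pos
    refine ⟨fun i => cp * e i, fun i => cq * e i, fun i => mul_pos hcppos (he i),
      fun i => mul_pos hcqpos (he i), fun i => ?_, fun i => ?_, fun i => ?_, fun i => ?_⟩
    · show cp * e i ≤ y i
      have := lt_of_lt_of_le (hcp i) (min_le_left _ _)
      rw [lt_div_iff₀ (he i)] at this
      linarith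
    · show y i ≤ cq * e i
      have h1 : c₂ ≤ cq := le_max_right _ _
      have h2 := hc₂ i
      rw [div_lt_iff₀ (he i)] at h2
      nlinarith [mul_le_mul_of_nonneg_right h1 (he i).le]
    · -- p < G p : easy bound via b^s
      rw [hG]
      simp only
      rw [hsum cp i]
      have h1 : b i < (cp * (r * e i)) ^ (1 / s) + b i := by
        have := Real.rpow_pos_of_pos (mul_pos hcppos (mul_pos hr0 (he i))) (1 / s)
        linarith
      have h2 : b i ^ s < ((cp * (r * e i)) ^ (1 / s) + b i) ^ s :=
        Real.rpow_lt_rpow (hb i).le h1 hspos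
      have h3 := lt_of_lt_of_le (hcp i) (min_le_right _ _)
      rw [lt_div_iff₀ (he i)] at h3
      linarith
    · -- G q < q : key inequality
      rw [hG]
      simp only
      rw [hsum cq i]
      have hx : (cq * (r * e i)) ^ (1 / s) + b i < (cq * e i) ^ (1 / s) := by
        have e1 : (cq * e i) ^ (1 / s) = cq ^ (1 / s) * e i ^ (1 / s) :=
          Real.mul_rpow hcqpos.le (he i).le
        have e2 : (cq * (r * e i)) ^ (1 / s)
            = cq ^ (1 / s) * (r ^ (1 / s) * e i ^ (1 / s)) := by
          rw [Real.mul_rpow hcqpos.le (mul_pos hr0 (he i)).le,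
            Real.mul_rpow hr0.le (he i).le]
        have hcqs : C₁ ≤ cq ^ (1 / s) := by
          have h1 : C₁ ^ s ≤ cq := le_max_left _ _
          have := Real.rpow_le_rpow (Real.rpow_pos_of_pos hC₁pos s).le h1
            (by positivity : (0:ℝ) ≤ 1 / s)
          rwa [← Real.rpow_mul hC₁pos.le, mul_one_div, div_self hs, Real.rpow_one] at this
        have hbi : b i < cq ^ (1 / s) * (e i ^ (1 / s) * (1 - r ^ (1 / s))) := by
          have h3 := hC₁ i
          rw [div_lt_iff₀ (hdenpos i)] at h3
          have h4 : C₁ * (e i ^ (1 / s) * (1 - r ^ (1 / s)))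
              ≤ cq ^ (1 / s) * (e i ^ (1 / s) * (1 - r ^ (1 / s))) :=
            mul_le_mul_of_nonneg_right hcqs (hdenpos i).le
          linarith
        nlinarith [e1, e2]
      have hs' : ((cq * e i) ^ (1 / s)) ^ s = cq * e i := by
        rw [one_div, Real.rpow_inv_rpow (mul_pos hcqpos (he i)).le hs]
      calc ((cq * (r * e i)) ^ (1 / s) + b i) ^ s
          < (((cq * e i) ^ (1 / s))) ^ s := by
            exact Real.rpow_lt_rpow
              (add_pos (Real.rpow_pos_of_pos (mul_pos hcqpos (mul_pos hr0 (he i))) _) (hb i)).le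
              hx hspos
        _ = cq * e i := hs'
end

section
/- Let A be an n×n nonnegative matrix, b ∈ ℝ^n with b ≫ 0, and s ∈ ℝ with s < 0 or s ≥ 1. Then the map G defined on strictly positive vectors by Gy = ((Ay)^{1/s} + b)^s (componentwise operations) is order-preserving and concave on the strictly positive cone. -/
section
variable {c s : ℝ}

lemma mono_aux (hc : 0 < c) (hs : s < 0 ∨ 1 ≤ s) {y z : ℝ}
    (hy : 0 < y) (hyz : y ≤ z) :
    (y ^ (1 / s) + c) ^ s ≤ (z ^ (1 / s) + c) ^ s := by
  have hz : 0 < z := lt_of_lt_of_le hy hyz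
  rcases hs with hs | hs
  · have hp : 1 / s ≤ 0 := by
      apply div_nonpos_of_nonneg_of_nonpos <;> linarith
    have h1 : z ^ (1 / s) ≤ y ^ (1 / s) := Real.rpow_le_rpow_of_nonpos hy hyz hp
    have h2 : 0 < z ^ (1 / s) + c := by positivity
    exact Real.rpow_le_rpow_of_nonpos h2 (by linarith) hs.le
  · have hp : 0 < 1 / s := by positivity
    have h1 : y ^ (1 / s) ≤ z ^ (1 / s) := Real.rpow_le_rpow hy.le hyz hp.le
    exact Real.rpow_le_rpow (by positivity) (by linarith) (by linarith)

lemma concave_aux' {c s p : ℝ} (hc : 0 < c) (hsp : s * p = 1) (hp1 : p ≤ 1) :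
    ConcaveOn ℝ (Set.Ioi (0 : ℝ)) (fun r => (r ^ p + c) ^ s) := by
  set f : ℝ → ℝ := fun r => (r ^ p + c) ^ s with hf_def
  have key : ∀ x ∈ Set.Ioi (0 : ℝ),
      HasDerivAt f ((x ^ p + c) ^ (s - 1) * x ^ (p - 1)) x := by
    intro x hx
    have hx0 : (0 : ℝ) < x := hx
    have hu : 0 < x ^ p + c := by positivity
    have h1 : HasDerivAt (fun r : ℝ => r ^ p + c) (p * x ^ (p - 1)) x :=
      (Real.hasDerivAt_rpow_const (Or.inl hx0.ne')).add_const c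
    have h2 : HasDerivAt (fun u : ℝ => u ^ s) (s * (x ^ p + c) ^ (s - 1)) (x ^ p + c) :=
      Real.hasDerivAt_rpow_const (Or.inl hu.ne')
    have h3 := h2.comp x h1
    refine HasDerivAt.congr_deriv h3 (Eq.symm ?_)
    linear_combination ((x ^ p + c) ^ (s - 1) * x ^ (p - 1)) * hsp.symm
  set g : ℝ → ℝ := fun x => (x ^ p + c) ^ (s - 1) * x ^ (p - 1) with hg_def
  have key2 : ∀ x ∈ Set.Ioi (0 : ℝ),
      HasDerivAt g ((p - 1) * c * ((x ^ p + c) ^ (s - 1 - 1) * x ^ (p - 1 - 1))) x := by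
    intro x hx
    have hx0 : (0 : ℝ) < x := hx
    have hu : 0 < x ^ p + c := by positivity
    have h1 : HasDerivAt (fun r : ℝ => r ^ p + c) (p * x ^ (p - 1)) x :=
      (Real.hasDerivAt_rpow_const (Or.inl hx0.ne')).add_const c
    have hA : HasDerivAt (fun r : ℝ => (r ^ p + c) ^ (s - 1))
        ((s - 1) * (x ^ p + c) ^ (s - 1 - 1) * (p * x ^ (p - 1))) x :=
      by have h2 := (Real.hasDerivAt_rpow_const (x := x ^ p + c) (p := s - 1) (Or.inl hu.ne')).comp x h1; exact h2
    have hB : HasDerivAt (fun r : ℝ => r ^ (p - 1)) ((p - 1) * x ^ (p - 1 - 1)) x :=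
      Real.hasDerivAt_rpow_const (Or.inl hx0.ne')
    have h3 := hA.mul hB
    refine HasDerivAt.congr_deriv h3 (Eq.symm ?_)
    have e1 : x ^ (p - 1) * x ^ (p - 1) = x ^ p * x ^ (p - 1 - 1) := by
      rw [← Real.rpow_add hx0, ← Real.rpow_add hx0]; ring_nf
    have e2 : (x ^ p + c) ^ (s - 1) = (x ^ p + c) ^ (s - 1 - 1) * (x ^ p + c) := by
      rw [← Real.rpow_add_one hu.ne' (s - 1 - 1)]; ring_nf
    rw [e2]
    generalize x ^ p = X at e1 ⊢
    generalize (X + c) ^ (s - 1 - 1) = U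
    generalize x ^ (p - 1) = a at e1 ⊢
    generalize x ^ (p - 1 - 1) = bb at e1 ⊢
    linear_combination (-(s - 1) * p * U) * e1 + (-(U * X * bb)) * hsp
  apply concaveOn_of_deriv2_nonpos (convex_Ioi 0)
  · exact fun x hx => (key x hx).continuousAt.continuousWithinAt
  · rw [interior_Ioi]
    exact fun x hx => (key x hx).differentiableAt.differentiableWithinAt
  · rw [interior_Ioi]
    have hgd : DifferentiableOn ℝ g (Set.Ioi 0) :=
      fun x hx => (key2 x hx).differentiableAt.differentiableWithinAt
    exact hgd.congr fun x hx => (key x hx).deriv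
  · rw [interior_Ioi]
    intro x hx
    have hx0 : (0 : ℝ) < x := hx
    have hu : 0 < x ^ p + c := by positivity
    have heq : deriv f =ᶠ[nhds x] g :=
      Filter.eventually_of_mem (isOpen_Ioi.mem_nhds hx) fun y hy => (key y hy).deriv
    have hd : deriv (deriv f) x = deriv g x := heq.deriv_eq
    rw [show deriv^[2] f = deriv (deriv f) by rfl, hd, (key2 x hx).deriv]
    have h1 : 0 < (x ^ p + c) ^ (s - 1 - 1) * x ^ (p - 1 - 1) := by positivity
    have h2 : p - 1 ≤ 0 := by linarith
    have := mul_pos hc h1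
    nlinarith

lemma concave_aux {c s : ℝ} (hc : 0 < c) (hs : s < 0 ∨ 1 ≤ s) :
    ConcaveOn ℝ (Set.Ioi (0 : ℝ)) (fun r => (r ^ (1 / s) + c) ^ s) := by
  have hs0 : s ≠ 0 := by rcases hs with h | h <;> intro h0 <;> rw [h0] at h <;> linarith
  refine concave_aux' hc (by field_simp) ?_
  rcases hs with h | h
  · have : 1 / s < 0 := by apply div_neg_of_pos_of_neg <;> linarith
    linarith
  · rw [div_le_one (by linarith)]; linarith

end

theorem stmt_11 {n : ℕ} (A : Matrix (Fin n) (Fin n) ℝ)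
    (hA : ∀ i j, 0 ≤ A i j)
    (b : Fin n → ℝ) (hb : ∀ i, 0 < b i) (s : ℝ) (hs : s < 0 ∨ 1 ≤ s)
    (G : (Fin n → ℝ) → (Fin n → ℝ))
    (hG : ∀ y, G y = fun i => ((∑ j, A i j * y j) ^ (1 / s) + b i) ^ s) :
    (∀ y z, (∀ i, 0 < y i) → (∀ i, 0 < z i) → y ≤ z → G y ≤ G z) ∧
      (∀ y z, (∀ i, 0 < y i) → (∀ i, 0 < z i) →
        ∀ lam : ℝ, lam ∈ Set.Icc (0 : ℝ) 1 →
          lam • G y + (1 - lam) • G z ≤ G (lam • y + (1 - lam) • z)) := by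
  have hs0 : s ≠ 0 := by rcases hs with h | h <;> intro h0 <;> rw [h0] at h <;> linarith
  have hp0 : (1 : ℝ) / s ≠ 0 := one_div_ne_zero hs0
  -- sums are positive if the row is nonzero
  have sum_pos : ∀ (i : Fin n) (y : Fin n → ℝ), (∀ j, 0 < y j) → (¬ ∀ j, A i j = 0) →
      0 < ∑ j, A i j * y j := by
    intro i y hy hrow
    push_neg at hrow
    obtain ⟨j0, hj0⟩ := hrow
    exact Finset.sum_pos' (fun j _ => mul_nonneg (hA i j) (hy j).le)
      ⟨j0, Finset.mem_univ _, mul_pos ((hA i j0).lt_of_ne (Ne.symm hj0)) (hy j0)⟩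
  have sum_zero : ∀ (i : Fin n) (y : Fin n → ℝ), (∀ j, A i j = 0) →
      (∑ j, A i j * y j) = 0 := by
    intro i y hrow
    simp [hrow]
  constructor
  · intro y z hy hz hyz
    rw [hG, hG]
    intro i
    simp only
    by_cases hrow : ∀ j, A i j = 0
    · rw [sum_zero i y hrow, sum_zero i z hrow]
    · refine mono_aux (hb i) hs (sum_pos i y hy hrow) ?_
      exact Finset.sum_le_sum fun j _ => mul_le_mul_of_nonneg_left (hyz j) (hA i j)
  · intro y z hy hz lam hlam
    obtain ⟨hl0, hl1⟩ := hlam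
    intro i
    have hGy := congrFun (hG y) i
    have hGz := congrFun (hG z) i
    have hGm := congrFun (hG (lam • y + (1 - lam) • z)) i
    simp only [Pi.add_apply, Pi.smul_apply, smul_eq_mul] at hGy hGz hGm ⊢
    rw [hGy, hGz, hGm]
    have hmix : (∑ j, A i j * (lam * y j + (1 - lam) * z j))
        = lam * (∑ j, A i j * y j) + (1 - lam) * (∑ j, A i j * z j) := by
      rw [Finset.mul_sum, Finset.mul_sum, ← Finset.sum_add_distrib]
      exact Finset.sum_congr rfl fun j _ => by ring
    rw [hmix]
    by_cases hrow : ∀ j, A i j = 0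
    · rw [sum_zero i y hrow, sum_zero i z hrow]
      have : lam * (0:ℝ) + (1 - lam) * 0 = 0 := by ring
      rw [this]
      have : lam * ((0:ℝ) ^ (1 / s) + b i) ^ s + (1 - lam) * ((0:ℝ) ^ (1 / s) + b i) ^ s
          = ((0:ℝ) ^ (1 / s) + b i) ^ s := by ring
      rw [this]
    · have hry := sum_pos i y hy hrow
      have hrz := sum_pos i z hz hrow
      have hconc := concave_aux (hb i) hs
      have := hconc.2 hry hrz hl0 (by linarith : (0:ℝ) ≤ 1 - lam) (by ring)
      simpa using this
end

section
/- Let A be an n×n nonnegative irreducible matrix, b ∈ ℝ^n strictly positive, and s a nonzero real. Then the equation x = (A x^s)^{1/s} + b (all operations componentwise) has a unique strictly positive solution if and only if r(A)^s < 1, where r(A) is the spectral radius of A. -/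
section PFAux

variable {n : ℕ}



lemma powEntryNonneg (A : Matrix (Fin n) (Fin n) ℝ) (hA : ∀ i j, 0 ≤ A i j) (k : ℕ) :
    ∀ i j, 0 ≤ (A ^ k) i j := by
  induction k with
  | zero => intro i j; by_cases h : i = j <;> simp [pow_zero, Matrix.one_apply, h]
  | succ k ih =>
    intro i j
    rw [pow_succ, Matrix.mul_apply]
    exact Finset.sum_nonneg fun l _ => mul_nonneg (ih i l) (hA l j)

lemma rowPos (A : Matrix (Fin n) (Fin n) ℝ) (hA : ∀ i j, 0 ≤ A i j)
    (hirr : ∀ i j, ∃ k : ℕ, 0 < k ∧ 0 < (A ^ k) i j) (i : Fin n) : ∃ j, 0 < A i j := by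
  obtain ⟨k, hk, hpos⟩ := hirr i i
  obtain ⟨k, rfl⟩ := Nat.exists_eq_succ_of_ne_zero hk.ne'
  rw [pow_succ', Matrix.mul_apply] at hpos
  by_contra h
  push_neg at h
  refine absurd hpos (not_lt.mpr (Finset.sum_nonpos fun l _ => ?_))
  have : A i l = 0 := le_antisymm (h l) (hA i l)
  simp [this]

set_option maxHeartbeats 1000000 in
lemma perron (A : Matrix (Fin n) (Fin n) ℝ) (hn : 0 < n) (hA : ∀ i j, 0 ≤ A i j)
    (hirr : ∀ i j, ∃ k : ℕ, 0 < k ∧ 0 < (A ^ k) i j) :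
    ∃ r0 : ℝ, 0 < r0 ∧ ∃ v : Fin n → ℝ, (∀ i, 0 < v i) ∧ A.mulVec v = r0 • v := by
  have hne : Nonempty (Fin n) := ⟨⟨0, hn⟩⟩
  -- the auxiliary strictly positive matrix B
  choose kk hkk hkkpos using hirr
  set m : ℕ := Finset.univ.sup (fun p : Fin n × Fin n => kk p.1 p.2) with hm
  set B : Matrix (Fin n) (Fin n) ℝ := ∑ l ∈ Finset.range (m + 1), A ^ l with hB
  have hBapp : ∀ i j, B i j = ∑ l ∈ Finset.range (m + 1), (A ^ l) i j := by
    intro i j; rw [hB, Matrix.sum_apply]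
  have hBnonneg : ∀ i j, 0 ≤ B i j := by
    intro i j; rw [hBapp]
    exact Finset.sum_nonneg fun l _ => powEntryNonneg A hA l i j
  have hBpos : ∀ i j, 0 < B i j := by
    intro i j
    have hmem : kk i j ∈ Finset.range (m + 1) := by
      simp only [Finset.mem_range, Nat.lt_succ_iff]
      exact Finset.le_sup (f := fun p : Fin n × Fin n => kk p.1 p.2)
        (Finset.mem_univ (i, j))
    calc (0:ℝ) < (A ^ kk i j) i j := hkkpos i j
      _ ≤ ∑ l ∈ Finset.range (m + 1), (A ^ l) i j :=
          Finset.single_le_sum (fun l _ => powEntryNonneg A hA l i j) hmem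
      _ = B i j := (hBapp i j).symm
  -- B maps nonzero nonneg vectors to strictly positive vectors
  have hBvec : ∀ y : Fin n → ℝ, (∀ i, 0 ≤ y i) → y ≠ 0 → ∀ i, 0 < B.mulVec y i := by
    intro y hy hy0 i
    obtain ⟨j0, hj0⟩ : ∃ j0, y j0 ≠ 0 := Function.ne_iff.mp hy0
    have hj0' : 0 < y j0 := lt_of_le_of_ne (hy j0) (Ne.symm hj0)
    have : 0 < B i j0 * y j0 := mul_pos (hBpos i j0) hj0'
    calc (0:ℝ) < B i j0 * y j0 := this
      _ ≤ ∑ j, B i j * y j :=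
          Finset.single_le_sum (fun j _ => mul_nonneg (hBnonneg i j) (hy j))
            (Finset.mem_univ j0)
      _ = B.mulVec y i := rfl
  -- the compact set S
  set S : Set ((Fin n → ℝ) × ℝ) :=
    {p | (∀ i, 0 ≤ p.1 i) ∧ (∑ i, p.1 i) = 1 ∧ 0 ≤ p.2 ∧
      ∀ i, p.2 * p.1 i ≤ A.mulVec p.1 i} with hS
  have h1 : IsClosed {p : (Fin n → ℝ) × ℝ | ∀ i, 0 ≤ p.1 i} := by
    rw [Set.setOf_forall]
    exact isClosed_iInter fun i =>
      isClosed_le continuous_const ((continuous_apply i).comp continuous_fst)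
  have h2 : IsClosed {p : (Fin n → ℝ) × ℝ | (∑ i, p.1 i) = 1} :=
    isClosed_eq (continuous_finset_sum _ fun i _ =>
      (continuous_apply i).comp continuous_fst) continuous_const
  have h3 : IsClosed {p : (Fin n → ℝ) × ℝ | 0 ≤ p.2} :=
    isClosed_le continuous_const continuous_snd
  have h4 : IsClosed {p : (Fin n → ℝ) × ℝ | ∀ i, p.2 * p.1 i ≤ A.mulVec p.1 i} := by
    rw [Set.setOf_forall]
    refine isClosed_iInter fun i => isClosed_le ?_ ?_
    · exact continuous_snd.mul ((continuous_apply i).comp continuous_fst)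
    · simp only [Matrix.mulVec, dotProduct]
      exact continuous_finset_sum _ fun j _ =>
        continuous_const.mul ((continuous_apply j).comp continuous_fst)
  have hSclosed : IsClosed S := by
    rw [hS, Set.setOf_and, Set.setOf_and, Set.setOf_and]
    exact h1.inter (h2.inter (h3.inter h4))
  set R : ℝ := ∑ i, ∑ j, A i j with hR
  have hsub : S ⊆ (Set.univ.pi fun _ : Fin n => Set.Icc (0:ℝ) 1) ×ˢ Set.Icc 0 R := by
    rintro ⟨x, t⟩ ⟨hx0, hx1, ht0, ht⟩
    constructor
    · intro i _
      refine ⟨hx0 i, ?_⟩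
      calc x i ≤ ∑ j, x j :=
            Finset.single_le_sum (fun j _ => hx0 j) (Finset.mem_univ i)
        _ = 1 := hx1
    · refine ⟨ht0, ?_⟩
      have hx1' : ∀ j, x j ≤ 1 := by
        intro j
        calc x j ≤ ∑ j', x j' :=
              Finset.single_le_sum (fun j' _ => hx0 j') (Finset.mem_univ j)
          _ = 1 := hx1
      calc t = t * ∑ i, x i := by rw [hx1, mul_one]
        _ = ∑ i, t * x i := Finset.mul_sum _ _ _
        _ ≤ ∑ i, A.mulVec x i := Finset.sum_le_sum fun i _ => ht i
        _ = ∑ i, ∑ j, A i j * x j := rfl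
        _ ≤ ∑ i, ∑ j, A i j := by
            refine Finset.sum_le_sum fun i _ => Finset.sum_le_sum fun j _ => ?_
            calc A i j * x j ≤ A i j * 1 :=
                  mul_le_mul_of_nonneg_left (hx1' j) (hA i j)
              _ = A i j := mul_one _
  have hScompact : IsCompact S :=
    ((isCompact_univ_pi fun _ => isCompact_Icc).prod isCompact_Icc).of_isClosed_subset
      hSclosed hsub
  have hSne : S.Nonempty := by
    refine ⟨(fun _ => (n : ℝ)⁻¹, 0), fun i => inv_nonneg.mpr (Nat.cast_nonneg n), ?_, le_refl 0, ?_⟩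
    · simp [Finset.sum_const, Finset.card_univ]
      rw [mul_inv_cancel₀]
      exact_mod_cast hn.ne'
    · intro i
      rw [zero_mul]
      show (0:ℝ) ≤ ∑ j, A i j * (fun _ : Fin n => (n : ℝ)⁻¹) j
      exact Finset.sum_nonneg fun j _ =>
        mul_nonneg (hA i j) (inv_nonneg.mpr (Nat.cast_nonneg n))
  obtain ⟨⟨v, r0⟩, hmem, hmax⟩ := hScompact.exists_isMaxOn hSne continuous_snd.continuousOn
  obtain ⟨hv0, hvsum, hr0, hle⟩ := hmem
  replace hv0 : ∀ i, 0 ≤ v i := hv0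
  replace hvsum : ∑ i, v i = 1 := hvsum
  replace hr0 : (0:ℝ) ≤ r0 := hr0
  replace hle : ∀ i, r0 * v i ≤ A.mulVec v i := hle
  have hvne : v ≠ 0 := by
    intro h
    rw [h] at hvsum
    simp at hvsum
  -- the eigen-equation
  have heig : A.mulVec v = r0 • v := by
    by_contra hne'
    set y : Fin n → ℝ := A.mulVec v - r0 • v with hy
    have hy0 : ∀ i, 0 ≤ y i := fun i => sub_nonneg.mpr (hle i)
    have hyne : y ≠ 0 := sub_ne_zero.mpr fun h => hne' h
    set w' : Fin n → ℝ := B.mulVec v with hw'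
    have hw'pos : ∀ i, 0 < w' i := hBvec v hv0 hvne
    have hgap : ∀ i, 0 < A.mulVec w' i - r0 * w' i := by
      intro i
      have h1 : A.mulVec w' - r0 • w' = B.mulVec y := by
        rw [hw', hy, Matrix.mulVec_sub, Matrix.mulVec_smul,
          Matrix.mulVec_mulVec, Matrix.mulVec_mulVec]
        have : A * B = B * A := by
          rw [hB, Finset.mul_sum, Finset.sum_mul]
          congr 1
          ext l
          rw [← pow_succ, ← pow_succ']
        rw [this]
      have h2 := hBvec y hy0 hyne i
      have : (A.mulVec w' - r0 • w') i = A.mulVec w' i - r0 * w' i := rfl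
      rw [h1] at this
      linarith [h2, this.symm]
    set σ : ℝ := ∑ i, w' i with hσ
    have hσpos : 0 < σ := Finset.sum_pos (fun i _ => hw'pos i) Finset.univ_nonempty
    set w : Fin n → ℝ := σ⁻¹ • w' with hw
    have hwpos : ∀ i, 0 < w i := fun i => by
      have := hw'pos i
      have := hσpos
      simp only [hw, Pi.smul_apply, smul_eq_mul]
      positivity
    have hwsum : ∑ i, w i = 1 := by
      simp only [hw, Pi.smul_apply, smul_eq_mul, ← Finset.mul_sum, ← hσ]
      exact inv_mul_cancel₀ hσpos.ne'
    have hw1 : ∀ i, w i ≤ 1 := fun i => by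
      calc w i ≤ ∑ j, w j :=
            Finset.single_le_sum (fun j _ => (hwpos j).le) (Finset.mem_univ i)
        _ = 1 := hwsum
    have hgapw : ∀ i, 0 < A.mulVec w i - r0 * w i := by
      intro i
      have h1 : A.mulVec w i = σ⁻¹ * A.mulVec w' i := by
        rw [hw, Matrix.mulVec_smul]
        rfl
      have h2 : w i = σ⁻¹ * w' i := rfl
      rw [h1, h2]
      have := hgap i
      have hσi : 0 < σ⁻¹ := inv_pos.mpr hσpos
      nlinarith
    set ε : ℝ := Finset.univ.inf' Finset.univ_nonempty
      (fun i => A.mulVec w i - r0 * w i) with hε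
    have hεpos : 0 < ε := by
      rw [hε, Finset.lt_inf'_iff]
      exact fun i _ => hgapw i
    have hεle : ∀ i, ε ≤ A.mulVec w i - r0 * w i := fun i =>
      Finset.inf'_le _ (Finset.mem_univ i)
    have hmemS : (w, r0 + ε) ∈ S := by
      refine ⟨fun i => (hwpos i).le, hwsum, show (0:ℝ) ≤ r0 + ε by linarith, fun i => ?_⟩
      show (r0 + ε) * w i ≤ A.mulVec w i
      have h1 : ε * w i ≤ ε := by
        calc ε * w i ≤ ε * 1 := mul_le_mul_of_nonneg_left (hw1 i) hεpos.le
          _ = ε := mul_one _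
      have h2 := hεle i
      nlinarith
    have hcon : r0 + ε ≤ r0 := hmax hmemS
    linarith
  -- positivity of v
  have hpowv : ∀ l : ℕ, (A ^ l).mulVec v = r0 ^ l • v := by
    intro l
    induction l with
    | zero => simp
    | succ l ih =>
      rw [pow_succ', ← Matrix.mulVec_mulVec, ih, Matrix.mulVec_smul, heig,
        smul_smul, pow_succ', mul_comm]
  have hc' : (1:ℝ) ≤ ∑ l ∈ Finset.range (m + 1), r0 ^ l := by
    calc (1:ℝ) = r0 ^ 0 := (pow_zero r0).symm
      _ ≤ ∑ l ∈ Finset.range (m + 1), r0 ^ l :=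
          Finset.single_le_sum (fun l _ => pow_nonneg hr0 l)
            (Finset.mem_range.mpr (Nat.succ_pos m))
  have hBv : B.mulVec v = (∑ l ∈ Finset.range (m + 1), r0 ^ l) • v := by
    funext i
    have hstep : B.mulVec v i = ∑ l ∈ Finset.range (m + 1), ((A ^ l).mulVec v) i := by
      simp only [Matrix.mulVec, dotProduct, hBapp, Finset.sum_mul]
      rw [Finset.sum_comm]
    rw [hstep]
    simp only [hpowv, Pi.smul_apply, smul_eq_mul]
    rw [← Finset.sum_mul]
  have hvpos : ∀ i, 0 < v i := by
    intro i
    have h1 := hBvec v hv0 hvne i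
    rw [hBv] at h1
    simp only [Pi.smul_apply, smul_eq_mul] at h1
    rcases (hv0 i).lt_or_eq with h | h
    · exact h
    · rw [← h, mul_zero] at h1
      exact absurd h1 (lt_irrefl 0)
  -- positivity of r0
  have hr0pos : 0 < r0 := by
    obtain ⟨j, hj⟩ := rowPos A hA (fun i j => ⟨kk i j, hkk i j, hkkpos i j⟩) ⟨0, hn⟩
    have h1 : 0 < A.mulVec v ⟨0, hn⟩ := by
      calc (0:ℝ) < A ⟨0, hn⟩ j * v j := mul_pos hj (hvpos j)
        _ ≤ ∑ j', A ⟨0, hn⟩ j' * v j' :=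
            Finset.single_le_sum (fun j' _ => mul_nonneg (hA _ j') (hvpos j').le)
              (Finset.mem_univ j)
        _ = A.mulVec v ⟨0, hn⟩ := rfl
    rw [heig] at h1
    simp only [Pi.smul_apply, smul_eq_mul] at h1
    by_contra hcon
    push_neg at hcon
    exact absurd h1 (not_lt.mpr (mul_nonpos_of_nonpos_of_nonneg hcon (hvpos ⟨0, hn⟩).le))
  exact ⟨r0, hr0pos, v, hvpos, heig⟩



set_option maxHeartbeats 1000000 in
lemma specRad_eq_aux (A : Matrix (Fin n) (Fin n) ℝ) (hA : ∀ i j, 0 ≤ A i j)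
    (hn : 0 < n) (r0 : ℝ) (v : Fin n → ℝ) (hr0 : 0 < r0) (hv : ∀ i, 0 < v i)
    (heig : A.mulVec v = r0 • v) :
    sSup {r : ℝ | ∃ μ ∈ spectrum ℂ (A.map (fun a => (a : ℂ))), r = ‖μ‖} = r0 := by
  have hne : Nonempty (Fin n) := ⟨⟨0, hn⟩⟩
  set A' : Matrix (Fin n) (Fin n) ℂ := A.map (fun a => (a : ℂ)) with hA'
  -- eigenvalues of A' are exactly given by nonzero kernel vectors
  have hspec : ∀ μ : ℂ, μ ∈ spectrum ℂ A' ↔ ∃ u : Fin n → ℂ, u ≠ 0 ∧ A'.mulVec u = μ • u := by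
    intro μ
    rw [spectrum.mem_iff]
    constructor
    · intro h
      have hdet : (algebraMap ℂ (Matrix (Fin n) (Fin n) ℂ) μ - A').det = 0 := by
        by_contra hd
        exact h (Matrix.isUnit_iff_isUnit_det _ |>.mpr (isUnit_iff_ne_zero.mpr hd))
      obtain ⟨u, hu0, hu⟩ := (Matrix.exists_mulVec_eq_zero_iff).mpr hdet
      refine ⟨u, hu0, ?_⟩
      have : (algebraMap ℂ (Matrix (Fin n) (Fin n) ℂ) μ).mulVec u - A'.mulVec u = 0 := by
        rw [← Matrix.sub_mulVec]; exact hu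
      have h2 : (algebraMap ℂ (Matrix (Fin n) (Fin n) ℂ) μ).mulVec u = μ • u := by
        ext i
        simp [Matrix.mulVec_smul, Algebra.algebraMap_eq_smul_one, Matrix.smul_mulVec]
      rw [h2] at this
      have := sub_eq_zero.mp this
      exact this.symm
    · rintro ⟨u, hu0, hu⟩ hunit
      have hdet : (algebraMap ℂ (Matrix (Fin n) (Fin n) ℂ) μ - A').det = 0 := by
        rw [← Matrix.exists_mulVec_eq_zero_iff]
        refine ⟨u, hu0, ?_⟩
        rw [Matrix.sub_mulVec, hu]
        have h2 : (algebraMap ℂ (Matrix (Fin n) (Fin n) ℂ) μ).mulVec u = μ • u := by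
          ext i
          simp [Algebra.algebraMap_eq_smul_one, Matrix.smul_mulVec]
        rw [h2, sub_self]
      rw [Matrix.isUnit_iff_isUnit_det, isUnit_iff_ne_zero] at hunit
      exact hunit hdet
  have hmem : r0 ∈ {r : ℝ | ∃ μ ∈ spectrum ℂ A', r = ‖μ‖} := by
    refine ⟨(r0 : ℂ), ?_, by rw [Complex.norm_real, Real.norm_eq_abs, abs_of_pos hr0]⟩
    rw [hspec]
    refine ⟨fun i => (v i : ℂ), ?_, ?_⟩
    · intro h
      have := congrFun h ⟨0, hn⟩
      simp only [Pi.zero_apply, Complex.ofReal_eq_zero] at this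
      exact (hv ⟨0, hn⟩).ne' this
    · ext i
      have h1 : A.mulVec v i = r0 * v i := by rw [heig]; rfl
      simp only [hA', Matrix.mulVec, dotProduct, Matrix.map_apply, Pi.smul_apply,
        smul_eq_mul]
      rw [show ∑ j, ((A i j : ℂ)) * (v j : ℂ) = ((∑ j, A i j * v j : ℝ) : ℂ) by push_cast; ring_nf]
      rw [show (∑ j, A i j * v j) = r0 * v i from h1]
      push_cast
      ring
  have hub : ∀ r ∈ {r : ℝ | ∃ μ ∈ spectrum ℂ A', r = ‖μ‖}, r ≤ r0 := by
    rintro r ⟨μ, hμ, rfl⟩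
    obtain ⟨u, hu0, hu⟩ := (hspec μ).mp hμ
    -- componentwise inequality
    have habs : ∀ i, ‖μ‖ * ‖u i‖ ≤ ∑ j, A i j * ‖u j‖ := by
      intro i
      have h1 : μ * u i = ∑ j, (A i j : ℂ) * u j := by
        have := congrFun hu i
        simp only [hA', Matrix.mulVec, dotProduct, Matrix.map_apply, Pi.smul_apply,
          smul_eq_mul] at this
        exact this.symm
      calc ‖μ‖ * ‖u i‖ = ‖μ * u i‖ := (norm_mul _ _).symm
        _ = ‖∑ j, (A i j : ℂ) * u j‖ := by rw [h1]
        _ ≤ ∑ j, ‖(A i j : ℂ) * u j‖ := norm_sum_le _ _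
        _ = ∑ j, A i j * ‖u j‖ := by
            refine Finset.sum_congr rfl fun j _ => ?_
            rw [norm_mul, Complex.norm_real, Real.norm_eq_abs, abs_of_nonneg (hA i j)]
    set t : ℝ := Finset.univ.sup' Finset.univ_nonempty (fun i => ‖u i‖ / v i)
      with ht
    obtain ⟨i1, _, hi1⟩ := Finset.exists_mem_eq_sup' Finset.univ_nonempty
      (fun i => ‖u i‖ / v i)
    have htpos : 0 < t := by
      obtain ⟨j0, hj0⟩ : ∃ j0, u j0 ≠ 0 := Function.ne_iff.mp hu0
      have : 0 < ‖u j0‖ / v j0 :=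
        div_pos (by simpa using hj0) (hv j0)
      refine lt_of_lt_of_le this ?_
      have h2 := Finset.le_sup' (fun i => ‖u i‖ / v i) (Finset.mem_univ j0)
      rw [← ht] at h2
      exact h2
    have hle_t : ∀ j, ‖u j‖ ≤ t * v j := by
      intro j
      have := Finset.le_sup' (fun i => ‖u i‖ / v i) (Finset.mem_univ j)
      rw [← ht] at this
      exact (div_le_iff₀ (hv j)).mp this
    have heq_t : ‖u i1‖ = t * v i1 := by
      have h3 : ‖u i1‖ / v i1 = t := by rw [ht, hi1]
      rw [div_eq_iff (hv i1).ne'] at h3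
      linarith [h3]
    have hchain : ‖μ‖ * (t * v i1) ≤ r0 * (t * v i1) := by
      calc ‖μ‖ * (t * v i1) = ‖μ‖ * ‖u i1‖ := by rw [heq_t]
        _ ≤ ∑ j, A i1 j * ‖u j‖ := habs i1
        _ ≤ ∑ j, A i1 j * (t * v j) := by
            exact Finset.sum_le_sum fun j _ =>
              mul_le_mul_of_nonneg_left (hle_t j) (hA i1 j)
        _ = t * ∑ j, A i1 j * v j := by rw [Finset.mul_sum]; exact Finset.sum_congr rfl fun j _ => by ring
        _ = t * (r0 * v i1) := by
            have h1 : A.mulVec v i1 = r0 * v i1 := by rw [heig]; rfl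
            rw [show (∑ j, A i1 j * v j) = A.mulVec v i1 from rfl, h1]
        _ = r0 * (t * v i1) := by ring
    have hpos : 0 < t * v i1 := mul_pos htpos (hv i1)
    exact le_of_mul_le_mul_right (by linarith [hchain]) hpos
  exact IsGreatest.csSup_eq ⟨hmem, hub⟩



lemma sumPos (A : Matrix (Fin n) (Fin n) ℝ) (s : ℝ) (hA : ∀ i j, 0 ≤ A i j)
    (hrow : ∀ i, ∃ j, 0 < A i j)
    (x : Fin n → ℝ) (hx : ∀ i, 0 < x i) (i : Fin n) :
    0 < ∑ j, A i j * x j ^ s := by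
  obtain ⟨j0, hj0⟩ := hrow i
  calc (0:ℝ) < A i j0 * x j0 ^ s := mul_pos hj0 (Real.rpow_pos_of_pos (hx j0) s)
    _ ≤ ∑ j, A i j * x j ^ s :=
        Finset.single_le_sum
          (fun j _ => mul_nonneg (hA i j) (Real.rpow_pos_of_pos (hx j) s).le)
          (Finset.mem_univ j0)

lemma Nmono (A : Matrix (Fin n) (Fin n) ℝ) (s : ℝ) (hA : ∀ i j, 0 ≤ A i j)
    (hrow : ∀ i, ∃ j, 0 < A i j) (hs : s ≠ 0)
    (x y : Fin n → ℝ) (hx : ∀ i, 0 < x i) (hxy : ∀ i, x i ≤ y i) (i : Fin n) :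
    (∑ j, A i j * x j ^ s) ^ (1/s) ≤ (∑ j, A i j * y j ^ s) ^ (1/s) := by
  have hy : ∀ i, 0 < y i := fun i => lt_of_lt_of_le (hx i) (hxy i)
  rcases lt_or_gt_of_ne hs with hneg | hpos
  · have hinner : ∀ j, y j ^ s ≤ x j ^ s := fun j =>
      Real.rpow_le_rpow_of_nonpos (hx j) (hxy j) hneg.le
    have hsum : (∑ j, A i j * y j ^ s) ≤ ∑ j, A i j * x j ^ s :=
      Finset.sum_le_sum fun j _ => mul_le_mul_of_nonneg_left (hinner j) (hA i j)
    exact Real.rpow_le_rpow_of_nonpos (sumPos A s hA hrow y hy i) hsum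
      (one_div_neg.mpr hneg).le
  · have hinner : ∀ j, x j ^ s ≤ y j ^ s := fun j =>
      Real.rpow_le_rpow (hx j).le (hxy j) hpos.le
    have hsum : (∑ j, A i j * x j ^ s) ≤ ∑ j, A i j * y j ^ s :=
      Finset.sum_le_sum fun j _ => mul_le_mul_of_nonneg_left (hinner j) (hA i j)
    exact Real.rpow_le_rpow (sumPos A s hA hrow x hx i).le hsum
      (one_div_pos.mpr hpos).le

lemma Nhom (A : Matrix (Fin n) (Fin n) ℝ) (s : ℝ) (hA : ∀ i j, 0 ≤ A i j) (hs : s ≠ 0)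
    (c : ℝ) (hc : 0 < c) (x : Fin n → ℝ) (hx : ∀ i, 0 < x i) (i : Fin n) :
    (∑ j, A i j * (c * x j) ^ s) ^ (1/s) = c * (∑ j, A i j * x j ^ s) ^ (1/s) := by
  have h1 : ∀ j, (c * x j) ^ s = c ^ s * x j ^ s := fun j =>
    Real.mul_rpow hc.le (hx j).le
  have h2 : (∑ j, A i j * (c * x j) ^ s) = c ^ s * ∑ j, A i j * x j ^ s := by
    rw [Finset.mul_sum]
    exact Finset.sum_congr rfl fun j _ => by rw [h1 j]; ring
  rw [h2, Real.mul_rpow (Real.rpow_nonneg hc.le s)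
    (Finset.sum_nonneg fun j _ => mul_nonneg (hA i j) (Real.rpow_pos_of_pos (hx j) s).le)]
  congr 1
  rw [← Real.rpow_mul hc.le, mul_one_div_cancel hs, Real.rpow_one]

lemma rpow_iff (r0 : ℝ) (s : ℝ) (hr0 : 0 < r0) (hs : s ≠ 0) :
    (r0 ^ s < 1 ↔ r0 ^ (1/s) < 1) := by
  rw [← Real.log_neg_iff (Real.rpow_pos_of_pos hr0 s),
    ← Real.log_neg_iff (Real.rpow_pos_of_pos hr0 (1/s)),
    Real.log_rpow hr0, Real.log_rpow hr0]
  rcases lt_or_gt_of_ne hs with hneg | hpos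
  · constructor
    · intro h
      have : 0 < Real.log r0 := by
        by_contra hc
        push_neg at hc
        nlinarith
      have h1s : 1/s < 0 := one_div_neg.mpr hneg
      nlinarith
    · intro h
      have : 0 < Real.log r0 := by
        by_contra hc
        push_neg at hc
        have h1s : 1/s < 0 := one_div_neg.mpr hneg
        nlinarith
      nlinarith
  · have h1s : 0 < 1/s := one_div_pos.mpr hpos
    constructor
    · intro h
      have : Real.log r0 < 0 := by
        by_contra hc
        push_neg at hc
        nlinarith
      nlinarith
    · intro h
      have : Real.log r0 < 0 := by
        by_contra hc
        push_neg at hc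
        nlinarith
      nlinarith

lemma fixed_ge (A : Matrix (Fin n) (Fin n) ℝ) (s : ℝ) (hn : 0 < n)
    (hA : ∀ i j, 0 ≤ A i j) (hrow : ∀ i, ∃ j, 0 < A i j) (hs : s ≠ 0)
    (b : Fin n → ℝ) (hb : ∀ i, 0 < b i)
    (x y : Fin n → ℝ) (hx : ∀ i, 0 < x i) (hy : ∀ i, 0 < y i)
    (hfx : ∀ i, x i = (∑ j, A i j * x j ^ s) ^ (1/s) + b i)
    (hfy : ∀ i, y i = (∑ j, A i j * y j ^ s) ^ (1/s) + b i) :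
    ∀ i, y i ≤ x i := by
  have hne : Nonempty (Fin n) := ⟨⟨0, hn⟩⟩
  set t : ℝ := Finset.univ.inf' Finset.univ_nonempty (fun i => x i / y i) with ht
  obtain ⟨i0, -, hi0⟩ := Finset.exists_mem_eq_inf' Finset.univ_nonempty
    (fun i => x i / y i)
  have htpos : 0 < t := by
    rw [ht, Finset.lt_inf'_iff]
    exact fun i _ => div_pos (hx i) (hy i)
  have hge : ∀ j, t * y j ≤ x j := by
    intro j
    have h1 : t ≤ x j / y j := by
      rw [ht]
      exact Finset.inf'_le _ (Finset.mem_univ j)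
    rw [le_div_iff₀ (hy j)] at h1
    linarith
  have heq : x i0 = t * y i0 := by
    have h1 : x i0 / y i0 = t := by rw [ht, hi0]
    rw [div_eq_iff (hy i0).ne'] at h1
    exact h1
  have ht1 : 1 ≤ t := by
    by_contra hcon
    push_neg at hcon
    have hkey : t * y i0 < x i0 := by
      calc t * y i0
          < t * ((∑ j, A i0 j * y j ^ s) ^ (1/s)) + b i0 := by
            have hN : 0 ≤ (∑ j, A i0 j * y j ^ s) ^ (1/s) :=
              (Real.rpow_pos_of_pos (sumPos A s hA hrow y hy i0) _).le
            have h2 : y i0 = (∑ j, A i0 j * y j ^ s) ^ (1/s) + b i0 := hfy i0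
            nlinarith [hb i0]
        _ = (∑ j, A i0 j * (t * y j) ^ s) ^ (1/s) + b i0 := by
            rw [Nhom A s hA hs t htpos y hy i0]
        _ ≤ (∑ j, A i0 j * x j ^ s) ^ (1/s) + b i0 := by
            have := Nmono A s hA hrow hs (fun j => t * y j) x
              (fun j => mul_pos htpos (hy j)) hge i0
            linarith
        _ = x i0 := (hfx i0).symm
    rw [← heq] at hkey
    exact lt_irrefl _ hkey
  intro i
  calc y i = 1 * y i := (one_mul _).symm
    _ ≤ t * y i := mul_le_mul_of_nonneg_right ht1 (hy i).le
    _ ≤ x i := hge i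

set_option maxHeartbeats 1000000 in
lemma fixed_exists (A : Matrix (Fin n) (Fin n) ℝ) (s : ℝ) (hn : 0 < n)
    (hA : ∀ i j, 0 ≤ A i j) (hrow : ∀ i, ∃ j, 0 < A i j) (hs : s ≠ 0)
    (b : Fin n → ℝ) (hb : ∀ i, 0 < b i)
    (V : Fin n → ℝ) (hV : ∀ i, 0 < V i) (ρ : ℝ) (hρ0 : 0 < ρ) (hρ1 : ρ < 1)
    (hNeig : ∀ i, (∑ j, A i j * V j ^ s) ^ (1/s) = ρ * V i) :
    ∃ x : Fin n → ℝ, (∀ i, 0 < x i) ∧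
      ∀ i, x i = (∑ j, A i j * x j ^ s) ^ (1/s) + b i := by
  have hne : Nonempty (Fin n) := ⟨⟨0, hn⟩⟩
  -- choice of c
  set c : ℝ := Finset.univ.sup' Finset.univ_nonempty (fun i => b i / ((1 - ρ) * V i))
    with hc
  have hcpos : 0 < c := by
    have h1 : b ⟨0, hn⟩ / ((1 - ρ) * V ⟨0, hn⟩) ≤ c := by
      rw [hc]
      exact Finset.le_sup' (fun i => b i / ((1 - ρ) * V i)) (Finset.mem_univ _)
    exact lt_of_lt_of_le (div_pos (hb _) (mul_pos (by linarith) (hV _))) h1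
  have hcb : ∀ i, b i ≤ c * ((1 - ρ) * V i) := by
    intro i
    have h1 : b i / ((1 - ρ) * V i) ≤ c := by
      rw [hc]
      exact Finset.le_sup' (fun i => b i / ((1 - ρ) * V i)) (Finset.mem_univ i)
    rw [div_le_iff₀ (mul_pos (by linarith) (hV i))] at h1
    linarith
  -- the iteration
  set g : (Fin n → ℝ) → (Fin n → ℝ) :=
    fun x i => (∑ j, A i j * x j ^ s) ^ (1/s) + b i with hg
  set seq : ℕ → (Fin n → ℝ) := fun k => g^[k] (fun i => c * V i) with hseq
  have hseq0 : seq 0 = fun i => c * V i := rfl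
  have hsucc : ∀ k, seq (k + 1) = g (seq k) := fun k =>
    Function.iterate_succ_apply' g k _
  have hgpos : ∀ x : Fin n → ℝ, (∀ i, 0 < x i) → ∀ i, 0 < g x i := by
    intro x hx i
    have := Real.rpow_pos_of_pos (sumPos A s hA hrow x hx i) (1/s)
    have := hb i
    show 0 < (∑ j, A i j * x j ^ s) ^ (1/s) + b i
    linarith
  have hpos : ∀ k i, 0 < seq k i := by
    intro k
    induction k with
    | zero => intro i; rw [hseq0]; exact mul_pos hcpos (hV i)
    | succ k ih => intro i; rw [hsucc]; exact hgpos (seq k) ih i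
  have hstep0 : ∀ i, g (fun i => c * V i) i ≤ c * V i := by
    intro i
    show (∑ j, A i j * (c * V j) ^ s) ^ (1/s) + b i ≤ c * V i
    rw [Nhom A s hA hs c hcpos V hV i, hNeig i]
    have := hcb i
    nlinarith
  have hdec : ∀ k i, seq (k + 1) i ≤ seq k i := by
    intro k
    induction k with
    | zero => intro i; rw [hsucc 0, hseq0]; exact hstep0 i
    | succ k ih =>
      intro i
      calc seq (k+2) i = g (seq (k+1)) i := by rw [hsucc]
        _ ≤ g (seq k) i := by
            show (∑ j, A i j * (seq (k+1)) j ^ s) ^ (1/s) + b i ≤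
              (∑ j, A i j * (seq k) j ^ s) ^ (1/s) + b i
            linarith [Nmono A s hA hrow hs (seq (k+1)) (seq k) (hpos (k+1)) ih i]
        _ = seq (k+1) i := (congrFun (hsucc k) i).symm
  have hlb : ∀ k i, b i ≤ seq k i := by
    intro k
    induction k with
    | zero =>
      intro i
      rw [hseq0]
      show b i ≤ c * V i
      have h1 := hcb i
      have h2 : 0 ≤ c * (ρ * V i) :=
        mul_nonneg hcpos.le (mul_nonneg hρ0.le (hV i).le)
      nlinarith
    | succ k ih =>
      intro i
      rw [hsucc]
      have := Real.rpow_pos_of_pos (sumPos A s hA hrow (seq k) (hpos k) i) (1/s)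
      show b i ≤ (∑ j, A i j * (seq k) j ^ s) ^ (1/s) + b i
      linarith
  -- the limit
  set L : Fin n → ℝ := fun i => ⨅ k, seq k i with hL
  have htend : ∀ i, Filter.Tendsto (fun k => seq k i) Filter.atTop (nhds (L i)) := by
    intro i
    exact tendsto_atTop_ciInf (antitone_nat_of_succ_le fun k => hdec k i)
      ⟨0, Set.forall_mem_range.mpr fun k => (hpos k i).le⟩
  have hLlb : ∀ i, b i ≤ L i := fun i => le_ciInf fun k => hlb k i
  have hLpos : ∀ i, 0 < L i := fun i => lt_of_lt_of_le (hb i) (hLlb i)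
  refine ⟨L, hLpos, fun i => ?_⟩
  have h1 : Filter.Tendsto (fun k => seq (k + 1) i) Filter.atTop (nhds (L i)) :=
    (htend i).comp (Filter.tendsto_add_atTop_nat 1)
  have hj : ∀ j, Filter.Tendsto (fun k => (seq k j) ^ s) Filter.atTop
      (nhds ((L j) ^ s)) := fun j =>
    (Real.continuousAt_rpow_const (L j) s (Or.inl (hLpos j).ne')).tendsto.comp (htend j)
  have hsum : Filter.Tendsto (fun k => ∑ j, A i j * (seq k j) ^ s) Filter.atTop
      (nhds (∑ j, A i j * (L j) ^ s)) :=
    tendsto_finset_sum _ fun j _ => (hj j).const_mul (A i j)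
  have houter : Filter.Tendsto (fun k => (∑ j, A i j * (seq k j) ^ s) ^ (1/s) + b i)
      Filter.atTop (nhds ((∑ j, A i j * (L j) ^ s) ^ (1/s) + b i)) := by
    have hca : ContinuousAt (fun z : ℝ => z ^ (1/s)) (∑ j, A i j * (L j) ^ s) :=
      Real.continuousAt_rpow_const _ _ (Or.inl (sumPos A s hA hrow L hLpos i).ne')
    exact (hca.tendsto.comp hsum).add_const (b i)
  have h2 : Filter.Tendsto (fun k => seq (k + 1) i) Filter.atTop
      (nhds ((∑ j, A i j * (L j) ^ s) ^ (1/s) + b i)) := by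
    have : (fun k => seq (k + 1) i) =
        fun k => (∑ j, A i j * (seq k j) ^ s) ^ (1/s) + b i := by
      funext k
      rw [hsucc]
    rw [this]
    exact houter
  exact tendsto_nhds_unique h1 h2

lemma fixed_not (A : Matrix (Fin n) (Fin n) ℝ) (s : ℝ) (hn : 0 < n)
    (hA : ∀ i j, 0 ≤ A i j) (hrow : ∀ i, ∃ j, 0 < A i j) (hs : s ≠ 0)
    (b : Fin n → ℝ) (hb : ∀ i, 0 < b i)
    (V : Fin n → ℝ) (hV : ∀ i, 0 < V i) (ρ : ℝ) (hρ1 : 1 ≤ ρ)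
    (hNeig : ∀ i, (∑ j, A i j * V j ^ s) ^ (1/s) = ρ * V i)
    (x : Fin n → ℝ) (hx : ∀ i, 0 < x i)
    (hfx : ∀ i, x i = (∑ j, A i j * x j ^ s) ^ (1/s) + b i) : False := by
  have hne : Nonempty (Fin n) := ⟨⟨0, hn⟩⟩
  set t : ℝ := Finset.univ.inf' Finset.univ_nonempty (fun i => x i / V i) with ht
  obtain ⟨i0, -, hi0⟩ := Finset.exists_mem_eq_inf' Finset.univ_nonempty
    (fun i => x i / V i)
  have htpos : 0 < t := by
    rw [ht, Finset.lt_inf'_iff]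
    exact fun i _ => div_pos (hx i) (hV i)
  have hge : ∀ j, t * V j ≤ x j := by
    intro j
    have h1 : t ≤ x j / V j := by
      rw [ht]; exact Finset.inf'_le _ (Finset.mem_univ j)
    rw [le_div_iff₀ (hV j)] at h1
    linarith
  have heq : x i0 = t * V i0 := by
    have h1 : x i0 / V i0 = t := by rw [ht, hi0]
    rw [div_eq_iff (hV i0).ne'] at h1
    exact h1
  have hkey : t * V i0 < x i0 := by
    calc t * V i0 < t * (ρ * V i0) + b i0 := by
          have h1 : V i0 ≤ ρ * V i0 := (le_mul_iff_one_le_left (hV i0)).mpr hρ1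
          have h2 : t * V i0 ≤ t * (ρ * V i0) :=
            mul_le_mul_of_nonneg_left h1 htpos.le
          linarith [hb i0]
      _ = (∑ j, A i0 j * (t * V j) ^ s) ^ (1/s) + b i0 := by
          rw [Nhom A s hA hs t htpos V hV i0, hNeig i0]
      _ ≤ (∑ j, A i0 j * x j ^ s) ^ (1/s) + b i0 := by
          have := Nmono A s hA hrow hs (fun j => t * V j) x
            (fun j => mul_pos htpos (hV j)) hge i0
          linarith
      _ = x i0 := (hfx i0).symm
  rw [← heq] at hkey
  exact lt_irrefl _ hkey

end PFAux

theorem stmt_15 {n : ℕ} (A : Matrix (Fin n) (Fin n) ℝ)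
    (hA : ∀ i j, 0 ≤ A i j) (hirr : MatIrreducible A)
    (b : Fin n → ℝ) (hb : ∀ i, 0 < b i) (s : ℝ) (hs : s ≠ 0) :
    (∃! x : Fin n → ℝ, (∀ i, 0 < x i) ∧
        ∀ i, x i = (∑ j, A i j * (x j) ^ s) ^ (1 / s) + b i) ↔
      specRad A ^ s < 1 := by
  rcases Nat.eq_zero_or_pos n with hn | hn
  · subst hn
    haveI : Subsingleton (Matrix (Fin 0) (Fin 0) ℂ) :=
      ⟨fun M N => by ext i; exact i.elim0⟩
    have hempty : {r : ℝ | ∃ μ ∈ spectrum ℂ (A.map (fun a => (a : ℂ))),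
        r = ‖μ‖} = ∅ := by
      ext r
      simp only [Set.mem_setOf_eq, Set.mem_empty_iff_false, iff_false, not_exists]
      rintro μ ⟨hμ, -⟩
      exact spectrum.mem_iff.mp hμ (isUnit_of_subsingleton _)
    have hrad : specRad A = 0 := by rw [specRad, hempty, Real.sSup_empty]
    constructor
    · intro _
      rw [hrad, Real.zero_rpow hs]
      norm_num
    · intro _
      exact ⟨fun _ => 1, ⟨fun i => i.elim0, fun i => i.elim0⟩,
        fun y _ => funext fun i => i.elim0⟩
  · obtain ⟨r0, hr0, v, hv, heig⟩ := perron A hn hA hirr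
    have hrad : specRad A = r0 := specRad_eq_aux A hA hn r0 v hr0 hv heig
    rw [hrad]
    have hrow : ∀ i, ∃ j, 0 < A i j := rowPos A hA hirr
    set V : Fin n → ℝ := fun i => v i ^ (1/s) with hVdef
    have hV : ∀ i, 0 < V i := fun i => Real.rpow_pos_of_pos (hv i) _
    set ρ : ℝ := r0 ^ (1/s) with hρdef
    have hρ0 : 0 < ρ := Real.rpow_pos_of_pos hr0 _
    have hNeig : ∀ i, (∑ j, A i j * (V j) ^ s) ^ (1/s) = ρ * V i := by
      intro i
      have h1 : ∀ j, (V j) ^ s = v j := by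
        intro j
        rw [hVdef]
        rw [← Real.rpow_mul (hv j).le, one_div_mul_cancel hs, Real.rpow_one]
      have h2 : (∑ j, A i j * v j) = r0 * v i := by
        have h3 := congrFun heig i
        simpa [Matrix.mulVec, dotProduct] using h3
      simp only [h1]
      rw [h2, Real.mul_rpow hr0.le (hv i).le]
    have hiff : r0 ^ s < 1 ↔ ρ < 1 := rpow_iff r0 s hr0 hs
    constructor
    · rintro ⟨x, ⟨hxpos, hxeq⟩, -⟩
      by_contra hcon
      have hρ1 : 1 ≤ ρ := by
        by_contra h
        push_neg at h
        exact hcon (hiff.mpr h)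
      exact fixed_not A s hn hA hrow hs b hb V hV ρ hρ1 hNeig x hxpos
        (fun i => by rw [hxeq i])
    · intro hlt
      have hρ1 : ρ < 1 := hiff.mp hlt
      obtain ⟨x, hxpos, hxeq⟩ :=
        fixed_exists A s hn hA hrow hs b hb V hV ρ hρ0 hρ1 hNeig
      refine ⟨x, ⟨hxpos, fun i => by rw [hxeq i]⟩, ?_⟩
      rintro y ⟨hypos, hyeq⟩
      funext i
      exact le_antisymm
        (fixed_ge A s hn hA hrow hs b hb x y hxpos hypos hxeq hyeq i)
        (fixed_ge A s hn hA hrow hs b hb y x hypos hxpos hyeq hxeq i)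
end

section
/- Let Q be an n×n irreducible stochastic matrix, β ∈ (0,1), c ∈ ℝ^n strictly positive, ρ ≠ 0 and α ≠ 0. Then the Epstein–Zin equation v = ((1−β) c^ρ + β ((Qv^α)^{1/α})^ρ)^{1/ρ} (componentwise operations) has a unique strictly positive solution v in ℝ^n. -/
/-- Log-Lipschitz estimate for `s ↦ log (a + b * exp s)` on `Iic L`. -/
lemma ez_philip {a b L : ℝ} (ha : 0 < a) (hb : 0 < b) {s t : ℝ}
    (hs : s ≤ L) (ht : t ≤ s) :
    Real.log (a + b * Real.exp s) - Real.log (a + b * Real.exp t)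
      ≤ (b * Real.exp L / (a + b * Real.exp L)) * (s - t) := by
  set lam : ℝ := b * Real.exp L / (a + b * Real.exp L) with hlam
  have hpos : ∀ x : ℝ, 0 < a + b * Real.exp x := fun x =>
    add_pos ha (mul_pos hb (Real.exp_pos x))
  have hder : ∀ x : ℝ, HasDerivAt (fun y => lam * y - Real.log (a + b * Real.exp y))
      (lam - b * Real.exp x / (a + b * Real.exp x)) x := by
    intro x
    have h1 : HasDerivAt (fun y : ℝ => a + b * Real.exp y) (b * Real.exp x) x := by
      simpa using ((Real.hasDerivAt_exp x).const_mul b).const_add a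
    have h2 := (h1.log (hpos x).ne')
    exact (((hasDerivAt_id x).const_mul lam).sub h2).congr_deriv (by ring)
  have hmono : MonotoneOn (fun y => lam * y - Real.log (a + b * Real.exp y)) (Set.Iic L) := by
    apply monotoneOn_of_deriv_nonneg (convex_Iic L)
    · exact (Continuous.sub (continuous_const.mul continuous_id)
        ((continuous_const.add (continuous_const.mul Real.continuous_exp)).log
          (fun x => (hpos x).ne'))).continuousOn
    · intro x _
      exact ((hder x).differentiableAt).differentiableWithinAt
    · intro x hx
      rw [(hder x).deriv]
      have hxL : x ≤ L := le_of_lt (by simpa using hx)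
      have : b * Real.exp x / (a + b * Real.exp x) ≤ lam := by
        rw [hlam, div_le_div_iff₀ (hpos x) (hpos L)]
        have h1 : Real.exp x ≤ Real.exp L := Real.exp_le_exp.2 hxL
        nlinarith [Real.exp_pos x, Real.exp_pos L, mul_le_mul_of_nonneg_left h1 hb.le]
      linarith
  have := hmono (Set.mem_Iic.2 (ht.trans hs)) (Set.mem_Iic.2 hs) ht
  simp only [] at this
  nlinarith [this]

noncomputable def Nfun {n : ℕ} (Q : Matrix (Fin n) (Fin n) ℝ) (θ : ℝ)
    (u : Fin n → ℝ) (i : Fin n) : ℝ :=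
  (1 / θ) * Real.log (∑ j, Q i j * Real.exp (θ * u j))

lemma ez_sum_pos {n : ℕ} {Q : Matrix (Fin n) (Fin n) ℝ}
    (hQ : ∀ i j, 0 ≤ Q i j) (hstoch : ∀ i, ∑ j, Q i j = 1)
    (θ : ℝ) (u : Fin n → ℝ) (i : Fin n) :
    0 < ∑ j, Q i j * Real.exp (θ * u j) := by
  have hrow : ∃ j, 0 < Q i j := by
    by_contra h
    push_neg at h
    have : ∀ j, Q i j = 0 := fun j => le_antisymm (h j) (hQ i j)
    have h0 := hstoch i
    rw [Finset.sum_congr rfl (fun j _ => this j)] at h0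
    simp at h0
  obtain ⟨j, hj⟩ := hrow
  refine Finset.sum_pos' (fun k _ => mul_nonneg (hQ i k) (Real.exp_pos _).le)
    ⟨j, Finset.mem_univ j, mul_pos hj (Real.exp_pos _)⟩

lemma Nfun_mono {n : ℕ} {Q : Matrix (Fin n) (Fin n) ℝ}
    (hQ : ∀ i j, 0 ≤ Q i j) (hstoch : ∀ i, ∑ j, Q i j = 1)
    {θ : ℝ} (hθ : θ ≠ 0) {u v : Fin n → ℝ} (h : ∀ j, u j ≤ v j) (i : Fin n) :
    Nfun Q θ u i ≤ Nfun Q θ v i := by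
  unfold Nfun
  rcases hθ.lt_or_gt with hneg | hpos
  · have hsum : ∑ j, Q i j * Real.exp (θ * v j) ≤ ∑ j, Q i j * Real.exp (θ * u j) :=
      Finset.sum_le_sum fun j _ => mul_le_mul_of_nonneg_left
        (Real.exp_le_exp.2 (mul_le_mul_of_nonpos_left (h j) hneg.le)) (hQ i j)
    have hlog := Real.log_le_log (ez_sum_pos hQ hstoch θ v i) hsum
    have h1θ : (1 : ℝ) / θ ≤ 0 := le_of_lt (one_div_neg.2 hneg)
    exact mul_le_mul_of_nonpos_left hlog h1θ
  · have hsum : ∑ j, Q i j * Real.exp (θ * u j) ≤ ∑ j, Q i j * Real.exp (θ * v j) :=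
      Finset.sum_le_sum fun j _ => mul_le_mul_of_nonneg_left
        (Real.exp_le_exp.2 (mul_le_mul_of_nonneg_left (h j) hpos.le)) (hQ i j)
    have hlog := Real.log_le_log (ez_sum_pos hQ hstoch θ u i) hsum
    exact mul_le_mul_of_nonneg_left hlog (by positivity)

lemma Nfun_const {n : ℕ} {Q : Matrix (Fin n) (Fin n) ℝ}
    (hstoch : ∀ i, ∑ j, Q i j = 1)
    {θ : ℝ} (hθ : θ ≠ 0) (κ : ℝ) (i : Fin n) :
    Nfun Q θ (fun _ => κ) i = κ := by
  unfold Nfun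
  rw [← Finset.sum_mul, hstoch i, one_mul, Real.log_exp]
  field_simp

lemma Nfun_shift {n : ℕ} {Q : Matrix (Fin n) (Fin n) ℝ}
    (hQ : ∀ i j, 0 ≤ Q i j) (hstoch : ∀ i, ∑ j, Q i j = 1)
    {θ : ℝ} (hθ : θ ≠ 0) (u : Fin n → ℝ) (d : ℝ) (i : Fin n) :
    Nfun Q θ (fun j => u j + d) i = Nfun Q θ u i + d := by
  unfold Nfun
  have : ∀ j : Fin n, Q i j * Real.exp (θ * (u j + d))
      = (Q i j * Real.exp (θ * u j)) * Real.exp (θ * d) := by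
    intro j
    rw [mul_add, Real.exp_add]
    ring
  rw [Finset.sum_congr rfl (fun j _ => this j), ← Finset.sum_mul,
    Real.log_mul (ez_sum_pos hQ hstoch θ u i).ne' (Real.exp_pos _).ne', Real.log_exp]
  field_simp

lemma Nfun_lip {n : ℕ} {Q : Matrix (Fin n) (Fin n) ℝ}
    (hQ : ∀ i j, 0 ≤ Q i j) (hstoch : ∀ i, ∑ j, Q i j = 1)
    {θ : ℝ} (hθ : θ ≠ 0) {u v : Fin n → ℝ} {d : ℝ}
    (h : ∀ j, |u j - v j| ≤ d) (i : Fin n) :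
    |Nfun Q θ u i - Nfun Q θ v i| ≤ d := by
  rw [abs_le]
  constructor
  · have h1 : ∀ j, v j ≤ u j + d := fun j => by
      have := (abs_le.1 (h j)).1; linarith
    have := Nfun_mono hQ hstoch hθ h1 i
    rw [Nfun_shift hQ hstoch hθ u d i] at this
    linarith
  · have h1 : ∀ j, u j ≤ v j + d := fun j => by
      have := (abs_le.1 (h j)).2; linarith
    have := Nfun_mono hQ hstoch hθ h1 i
    rw [Nfun_shift hQ hstoch hθ v d i] at this
    linarith

set_option maxHeartbeats 1000000 in
theorem stmt_19 {n : ℕ} (Q : Matrix (Fin n) (Fin n) ℝ)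
    (hQ : ∀ i j, 0 ≤ Q i j) (hstoch : ∀ i, ∑ j, Q i j = 1)
    (hirr : MatIrreducible Q)
    (β : ℝ) (hβ : β ∈ Set.Ioo (0 : ℝ) 1)
    (c : Fin n → ℝ) (hc : ∀ i, 0 < c i)
    (ρ α : ℝ) (hρ : ρ ≠ 0) (hα : α ≠ 0) :
    ∃! v : Fin n → ℝ, (∀ i, 0 < v i) ∧
      ∀ i, v i = ((1 - β) * (c i) ^ ρ +
        β * ((∑ j, Q i j * (v j) ^ α) ^ (1 / α)) ^ ρ) ^ (1 / ρ) := by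
  obtain ⟨hβ0, hβ1⟩ := hβ
  rcases Nat.eq_zero_or_pos n with hn | hn
  · subst hn
    refine ⟨fun _ => 1, ⟨fun i => i.elim0, fun i => i.elim0⟩, ?_⟩
    intro v _
    funext i; exact i.elim0
  have hne : Nonempty (Fin n) := ⟨⟨0, hn⟩⟩
  set θ := α / ρ with hθdef
  have hθ : θ ≠ 0 := div_ne_zero hα hρ
  set a : Fin n → ℝ := fun i => (1 - β) * c i ^ ρ with hadef
  have ha : ∀ i, 0 < a i := fun i =>
    mul_pos (by linarith) (Real.rpow_pos_of_pos (hc i) ρ)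
  obtain ⟨imin, -, hmin⟩ := Finset.exists_min_image Finset.univ a
    ⟨Classical.arbitrary (Fin n), Finset.mem_univ _⟩
  obtain ⟨imax, -, hmax⟩ := Finset.exists_max_image Finset.univ a
    ⟨Classical.arbitrary (Fin n), Finset.mem_univ _⟩
  have hamin : ∀ i, a imin ≤ a i := fun i => hmin i (Finset.mem_univ i)
  have hamax : ∀ i, a i ≤ a imax := fun i => hmax i (Finset.mem_univ i)
  set m := a imin / (1 - β) with hmdef
  set M := a imax / (1 - β) with hMdef
  have hm : 0 < m := div_pos (ha imin) (by linarith)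
  have hM : 0 < M := div_pos (ha imax) (by linarith)
  have hmM : m ≤ M := (div_le_div_iff_of_pos_right (by linarith)).2 (hamin imax)
  set L0 := Real.log m with hL0def
  set L1 := Real.log M with hL1def
  have hL01 : L0 ≤ L1 := Real.log_le_log hm hmM
  have hexpL0 : Real.exp L0 = m := Real.exp_log hm
  have hexpL1 : Real.exp L1 = M := Real.exp_log hM
  have h1β : (1 - β) ≠ 0 := ne_of_gt (by linarith)
  have hm' : m * (1 - β) = a imin := by rw [hmdef]; field_simp
  have hM' : M * (1 - β) = a imax := by rw [hMdef]; field_simp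
  have hmid : a imin + β * m = m := by linear_combination -hm'
  have hMid : a imax + β * M = M := by linear_combination -hM'
  set lam := β * M / (a imin + β * M) with hlamdef
  have hden : 0 < a imin + β * M := add_pos (ha imin) (mul_pos hβ0 hM)
  have hlam0 : 0 ≤ lam := le_of_lt (div_pos (mul_pos hβ0 hM) hden)
  have hlam1 : lam < 1 := by
    rw [hlamdef, div_lt_one hden]
    linarith [ha imin]
  set F : (Fin n → ℝ) → (Fin n → ℝ) :=
    fun u i => Real.log (a i + β * Real.exp (Nfun Q θ u i)) with hFdef
  have hinner : ∀ (u : Fin n → ℝ) i, 0 < a i + β * Real.exp (Nfun Q θ u i) :=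
    fun u i => add_pos (ha i) (mul_pos hβ0 (Real.exp_pos _))
  -- N stays in the band
  have hNband : ∀ (u : Fin n → ℝ), (∀ j, L0 ≤ u j ∧ u j ≤ L1) →
      ∀ i, L0 ≤ Nfun Q θ u i ∧ Nfun Q θ u i ≤ L1 := by
    intro u hu i
    constructor
    · calc L0 = Nfun Q θ (fun _ => L0) i := (Nfun_const hstoch hθ L0 i).symm
        _ ≤ Nfun Q θ u i := Nfun_mono hQ hstoch hθ (fun j => (hu j).1) i
    · calc Nfun Q θ u i ≤ Nfun Q θ (fun _ => L1) i :=
          Nfun_mono hQ hstoch hθ (fun j => (hu j).2) i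
        _ = L1 := Nfun_const hstoch hθ L1 i
  -- F maps the band into itself
  have hFK : ∀ (u : Fin n → ℝ), (∀ j, L0 ≤ u j ∧ u j ≤ L1) →
      ∀ i, L0 ≤ F u i ∧ F u i ≤ L1 := by
    intro u hu i
    obtain ⟨hNlo, hNhi⟩ := hNband u hu i
    constructor
    · rw [hL0def]
      apply Real.log_le_log hm
      have h1 : m ≤ Real.exp (Nfun Q θ u i) := by
        rw [← hexpL0]; exact Real.exp_le_exp.2 hNlo
      calc m = a imin + β * m := hmid.symm
        _ ≤ a i + β * Real.exp (Nfun Q θ u i) := by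
            have := hamin i
            nlinarith
    · rw [hL1def]
      apply Real.log_le_log (hinner u i)
      have h1 : Real.exp (Nfun Q θ u i) ≤ M := by
        rw [← hexpL1]; exact Real.exp_le_exp.2 hNhi
      calc a i + β * Real.exp (Nfun Q θ u i) ≤ a imax + β * M := by
            have := hamax i
            nlinarith
        _ = M := hMid
  -- contraction estimate
  have hcontr : ∀ (u v : Fin n → ℝ),
      (∀ j, L0 ≤ u j ∧ u j ≤ L1) → (∀ j, L0 ≤ v j ∧ v j ≤ L1) →
      ∀ d : ℝ, 0 ≤ d → (∀ j, |u j - v j| ≤ d) →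
      ∀ i, |F u i - F v i| ≤ lam * d := by
    intro u v hu hv d hd hduv i
    have hNu := (hNband u hu i).2
    have hNv := (hNband v hv i).2
    have hN := Nfun_lip hQ hstoch hθ hduv i
    have key : ∀ s t : ℝ, s ≤ L1 → t ≤ s → s - t ≤ d →
        Real.log (a i + β * Real.exp s) - Real.log (a i + β * Real.exp t)
          ≤ lam * d := by
      intro s t hsL hts hstd
      have h1 := ez_philip (ha i) hβ0 hsL hts
      have h2 : β * Real.exp L1 / (a i + β * Real.exp L1) ≤ lam := by
        rw [hexpL1, hlamdef]
        apply div_le_div_of_nonneg_left (mul_nonneg hβ0.le hM.le) hden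
        linarith [hamin i]
      have hnum : (0:ℝ) ≤ β * Real.exp L1 / (a i + β * Real.exp L1) :=
        le_of_lt (div_pos (mul_pos hβ0 (Real.exp_pos _))
          (add_pos (ha i) (mul_pos hβ0 (Real.exp_pos _))))
      have h3 : β * Real.exp L1 / (a i + β * Real.exp L1) * (s - t) ≤ lam * d :=
        calc β * Real.exp L1 / (a i + β * Real.exp L1) * (s - t)
            ≤ β * Real.exp L1 / (a i + β * Real.exp L1) * d :=
              mul_le_mul_of_nonneg_left hstd hnum
          _ ≤ lam * d := mul_le_mul_of_nonneg_right h2 hd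
      linarith
    rcases le_total (Nfun Q θ v i) (Nfun Q θ u i) with hcc | hcc
    · have hmono : F v i ≤ F u i := by
        apply Real.log_le_log (hinner v i)
        have := Real.exp_le_exp.2 hcc
        nlinarith
      have hkey := key (Nfun Q θ u i) (Nfun Q θ v i) hNu hcc
        (by have := (abs_le.1 hN).2; linarith)
      rw [abs_le]
      have hFu : F u i - F v i ≤ lam * d := hkey
      exact ⟨by nlinarith [mul_nonneg hlam0 hd], hFu⟩
    · have hmono : F u i ≤ F v i := by
        apply Real.log_le_log (hinner u i)
        have := Real.exp_le_exp.2 hcc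
        nlinarith
      have hkey := key (Nfun Q θ v i) (Nfun Q θ u i) hNv hcc
        (by have := (abs_le.1 hN).1; linarith)
      rw [abs_le]
      have hFv : F v i - F u i ≤ lam * d := hkey
      exact ⟨by linarith, by nlinarith [mul_nonneg hlam0 hd]⟩
  -- the closed band K
  set K : Set (Fin n → ℝ) := Set.Icc (fun _ => L0) (fun _ => L1) with hKdef
  have hKmem : ∀ u : Fin n → ℝ, u ∈ K ↔ ∀ j, L0 ≤ u j ∧ u j ≤ L1 := by
    intro u
    rw [hKdef, Set.mem_Icc]
    constructor
    · rintro ⟨h1, h2⟩ j; exact ⟨h1 j, h2 j⟩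
    · intro h; exact ⟨fun j => (h j).1, fun j => (h j).2⟩
  have hKclosed : IsClosed K := isClosed_Icc
  haveI hKne : Nonempty K := ⟨⟨fun _ => L0, (hKmem _).2 fun j => ⟨le_rfl, hL01⟩⟩⟩
  haveI hKcomp : CompleteSpace K := hKclosed.completeSpace_coe
  set Fm : K → K := fun u => ⟨F u.1, (hKmem _).2 (hFK u.1 ((hKmem _).1 u.2))⟩
    with hFmdef
  have hCW : ContractingWith lam.toNNReal Fm := by
    constructor
    · rw [← NNReal.coe_lt_coe, Real.coe_toNNReal _ hlam0, NNReal.coe_one]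
      exact hlam1
    · apply LipschitzWith.of_dist_le_mul
      intro x y
      rw [Subtype.dist_eq, Real.coe_toNNReal _ hlam0]
      refine (dist_pi_le_iff (mul_nonneg hlam0 dist_nonneg)).2 fun i => ?_
      rw [Real.dist_eq]
      exact hcontr x.1 y.1 ((hKmem _).1 x.2) ((hKmem _).1 y.2)
        (dist x.1 y.1) dist_nonneg
        (fun j => by rw [← Real.dist_eq]; exact dist_le_pi_dist x.1 y.1 j) i
  -- equivalence with the original equation
  have hequiv : ∀ w : Fin n → ℝ, (∀ i, 0 < w i) →
      ((∀ i, w i = (a i + β * ((∑ j, Q i j * w j ^ α) ^ (1 / α)) ^ ρ) ^ (1 / ρ)) ↔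
        F (fun j => ρ * Real.log (w j)) = fun j => ρ * Real.log (w j)) := by
    intro w hw
    have hrw : ∀ j, Real.exp (θ * (ρ * Real.log (w j))) = w j ^ α := by
      intro j
      rw [Real.rpow_def_of_pos (hw j)]
      congr 1
      rw [hθdef]
      field_simp
    have hSrw : ∀ i, ∑ j, Q i j * Real.exp (θ * (ρ * Real.log (w j)))
        = ∑ j, Q i j * w j ^ α :=
      fun i => Finset.sum_congr rfl fun j _ => by rw [hrw j]
    have hSpos : ∀ i, 0 < ∑ j, Q i j * w j ^ α := by
      intro i
      rw [← hSrw i]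
      exact ez_sum_pos hQ hstoch θ (fun j => ρ * Real.log (w j)) i
    have hExpN : ∀ i, Real.exp (Nfun Q θ (fun j => ρ * Real.log (w j)) i)
        = ((∑ j, Q i j * w j ^ α) ^ (1 / α)) ^ ρ := by
      intro i
      unfold Nfun
      rw [hSrw i, mul_comm, ← Real.rpow_def_of_pos (hSpos i),
        ← Real.rpow_mul (hSpos i).le]
      congr 1
      rw [hθdef, one_div_div]
      ring
    have hinpos : ∀ i, 0 < a i + β * ((∑ j, Q i j * w j ^ α) ^ (1 / α)) ^ ρ := by
      intro i
      have := Real.rpow_pos_of_pos (Real.rpow_pos_of_pos (hSpos i) (1 / α)) ρ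
      exact add_pos (ha i) (mul_pos hβ0 this)
    have hFuw : ∀ i, F (fun j => ρ * Real.log (w j)) i
        = Real.log (a i + β * ((∑ j, Q i j * w j ^ α) ^ (1 / α)) ^ ρ) := by
      intro i
      rw [hFdef]
      simp only []
      rw [hExpN i]
    constructor
    · intro heq
      funext j
      rw [hFuw j]
      conv_rhs => rw [heq j]
      rw [Real.log_rpow (hinpos j)]
      field_simp
    · intro hfix i
      have h := congrFun hfix i
      rw [hFuw i] at h
      have h2 : a i + β * ((∑ j, Q i j * w j ^ α) ^ (1 / α)) ^ ρ = w i ^ ρ := by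
        have h3 := congrArg Real.exp h
        rw [Real.exp_log (hinpos i)] at h3
        rw [h3, Real.rpow_def_of_pos (hw i), mul_comm]
      rw [h2, ← Real.rpow_mul (hw i).le, mul_one_div_cancel hρ, Real.rpow_one]
  -- any fixed point of F lies in the band
  have hfixK : ∀ u : Fin n → ℝ, F u = u → ∀ j, L0 ≤ u j ∧ u j ≤ L1 := by
    intro u hfix
    obtain ⟨jmin, -, hjmin⟩ := Finset.exists_min_image Finset.univ u
      ⟨Classical.arbitrary (Fin n), Finset.mem_univ _⟩
    obtain ⟨jmax, -, hjmax⟩ := Finset.exists_max_image Finset.univ u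
      ⟨Classical.arbitrary (Fin n), Finset.mem_univ _⟩
    have hlow : L0 ≤ u jmin := by
      have h := congrFun hfix jmin
      have hNge : u jmin ≤ Nfun Q θ u jmin := by
        calc u jmin = Nfun Q θ (fun _ => u jmin) jmin :=
            (Nfun_const hstoch hθ (u jmin) jmin).symm
          _ ≤ Nfun Q θ u jmin :=
            Nfun_mono hQ hstoch hθ (fun j => hjmin j (Finset.mem_univ j)) jmin
      have hexp : Real.exp (u jmin) = a jmin + β * Real.exp (Nfun Q θ u jmin) := by
        rw [← h]
        exact Real.exp_log (hinner u jmin)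
      have hx : a imin + β * Real.exp (u jmin) ≤ Real.exp (u jmin) := by
        have h1 : Real.exp (u jmin) ≤ Real.exp (Nfun Q θ u jmin) :=
          Real.exp_le_exp.2 hNge
        rw [hexp]
        nlinarith [hamin jmin]
      have h2 : m * (1 - β) ≤ Real.exp (u jmin) * (1 - β) := by nlinarith
      have hxm : m ≤ Real.exp (u jmin) :=
        le_of_mul_le_mul_right (by linarith) (by linarith : (0:ℝ) < 1 - β)
      calc L0 = Real.log m := hL0def
        _ ≤ Real.log (Real.exp (u jmin)) := Real.log_le_log hm hxm
        _ = u jmin := Real.log_exp _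
    have hup : u jmax ≤ L1 := by
      have h := congrFun hfix jmax
      have hNle : Nfun Q θ u jmax ≤ u jmax := by
        calc Nfun Q θ u jmax ≤ Nfun Q θ (fun _ => u jmax) jmax :=
            Nfun_mono hQ hstoch hθ (fun j => hjmax j (Finset.mem_univ j)) jmax
          _ = u jmax := Nfun_const hstoch hθ (u jmax) jmax
      have hexp : Real.exp (u jmax) = a jmax + β * Real.exp (Nfun Q θ u jmax) := by
        rw [← h]
        exact Real.exp_log (hinner u jmax)
      have hx : Real.exp (u jmax) ≤ a imax + β * Real.exp (u jmax) := by
        have h1 : Real.exp (Nfun Q θ u jmax) ≤ Real.exp (u jmax) :=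
          Real.exp_le_exp.2 hNle
        rw [hexp]
        nlinarith [hamax jmax]
      have h2 : Real.exp (u jmax) * (1 - β) ≤ M * (1 - β) := by nlinarith
      have hxM : Real.exp (u jmax) ≤ M :=
        le_of_mul_le_mul_right (by linarith) (by linarith : (0:ℝ) < 1 - β)
      calc u jmax = Real.log (Real.exp (u jmax)) := (Real.log_exp _).symm
        _ ≤ Real.log M := Real.log_le_log (Real.exp_pos _) hxM
        _ = L1 := hL1def.symm
    intro j
    exact ⟨hlow.trans (hjmin j (Finset.mem_univ j)),
      (hjmax j (Finset.mem_univ j)).trans hup⟩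
  -- assemble
  have hfp : Fm (ContractingWith.fixedPoint Fm hCW) = ContractingWith.fixedPoint Fm hCW :=
    hCW.fixedPoint_isFixedPt
  set u : Fin n → ℝ := (ContractingWith.fixedPoint Fm hCW).1 with hudef
  have huF : F u = u := congrArg Subtype.val hfp
  set v : Fin n → ℝ := fun i => Real.exp (u i / ρ) with hvdef
  have hv : ∀ i, 0 < v i := fun i => Real.exp_pos _
  have huv : (fun j => ρ * Real.log (v j)) = u := by
    funext j
    rw [hvdef]
    simp only [Real.log_exp]
    field_simp
  have heqv := (hequiv v hv).2 (by rw [huv]; exact huF)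
  refine ⟨v, ⟨hv, ?_⟩, ?_⟩
  · intro i
    have := heqv i
    simp only [hadef] at this
    exact this
  · rintro v' ⟨hv', heq'⟩
    have heq'' : ∀ i, v' i
        = (a i + β * ((∑ j, Q i j * v' j ^ α) ^ (1 / α)) ^ ρ) ^ (1 / ρ) := by
      intro i
      simp only [hadef]
      exact heq' i
    have hfix' := (hequiv v' hv').1 heq''
    have hu'K : (fun j => ρ * Real.log (v' j)) ∈ K :=
      (hKmem _).2 (hfixK _ hfix')
    have hFm' : Fm ⟨fun j => ρ * Real.log (v' j), hu'K⟩
        = ⟨fun j => ρ * Real.log (v' j), hu'K⟩ := Subtype.ext hfix'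
    have hEq := hCW.fixedPoint_unique hFm'
    have hu'u : (fun j => ρ * Real.log (v' j)) = u := congrArg Subtype.val hEq
    funext i
    have hui : ρ * Real.log (v' i) = u i := congrFun hu'u i
    calc v' i = Real.exp (Real.log (v' i)) := (Real.exp_log (hv' i)).symm
      _ = Real.exp (u i / ρ) := by rw [← hui]; congr 1; field_simp
      _ = v i := rfl
end
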